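/- arXiv:0706.2484 — 9 statements merged into one kernel-verified Lean document; each statement's English description precedes it below -/
import Mathlib

section
/- Let S be a nonempty set and g : S → S a map such that for every positive integer m the set Fix(g^m) = {x ∈ S : g^m(x) = x} is finite, and let φ(m) denote its cardinality. Then for every positive integer m, Φ₁(m, φ) ≡ 0 (mod m), i.e., m divides Φ₁(m, φ). -/
open scoped Classical

/-- `Phi1 m φ = ∑_{d ∣ m, d squarefree} μ(d) · φ(m/d)`. -/
noncomputable def Phi1 (m : ℕ) (φ : ℕ → ℤ) : ℤ :=
  ∑ d ∈ m.divisors.filter (fun d => Squarefree d),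
    (ArithmeticFunction.moebius d) * φ (m / d)

/-- If `φ(m)` is the number of fixed points of the `m`-th iterate of `g`, then
`Φ₁(m, φ) ≡ 0 (mod m)`. -/
theorem statement1 {S : Type*} [Nonempty S] (g : S → S)
    (hfin : ∀ m : ℕ, 0 < m → {x : S | g^[m] x = x}.Finite)
    (φ : ℕ → ℤ)
    (hφ : ∀ m : ℕ, 0 < m → φ m = ({x : S | g^[m] x = x}.ncard : ℤ))
    (m : ℕ) (hm : 0 < m) :
    (m : ℤ) ∣ Phi1 m φ := by
  classical
  set f : ℕ → ℤ := fun d => (({x : S | Function.minimalPeriod g x = d}.ncard : ℤ)) with hf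
  have hTfin : ∀ d : ℕ, 0 < d → {x : S | Function.minimalPeriod g x = d}.Finite := by
    intro d hd
    apply (hfin d hd).subset
    intro x hx
    simp only [Set.mem_setOf_eq] at hx ⊢
    have h := Function.isPeriodicPt_minimalPeriod g x
    rw [hx] at h
    exact h
  -- Step 1: φ n = ∑_{d | n} f d for n > 0.
  have hsum : ∀ n > 0, ∑ d ∈ n.divisors, f d = φ n := by
    intro n hn
    rw [hφ n hn]
    have hA : {x : S | g^[n] x = x}.ncard = (hfin n hn).toFinset.card :=
      Set.ncard_eq_toFinset_card _ (hfin n hn)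
    have key : (hfin n hn).toFinset.card
        = ∑ d ∈ n.divisors, ((hfin n hn).toFinset.filter
            (fun x => Function.minimalPeriod g x = d)).card := by
      apply Finset.card_eq_sum_card_fiberwise
      intro x hx
      rw [Finset.mem_coe, Set.Finite.mem_toFinset] at hx
      rw [Finset.mem_coe, Nat.mem_divisors]
      refine ⟨Function.IsPeriodicPt.minimalPeriod_dvd hx, hn.ne'⟩
    have hfib : ∀ d ∈ n.divisors,
        (((hfin n hn).toFinset.filter (fun x => Function.minimalPeriod g x = d)).card : ℤ)
          = f d := by
      intro d hd
      rw [Nat.mem_divisors] at hd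
      have hdpos : 0 < d := Nat.pos_of_dvd_of_pos hd.1 hn
      have : (hfin n hn).toFinset.filter (fun x => Function.minimalPeriod g x = d)
          = (hTfin d hdpos).toFinset := by
        ext x
        simp only [Finset.mem_filter, Set.Finite.mem_toFinset, Set.mem_setOf_eq]
        constructor
        · rintro ⟨_, h⟩; exact h
        · intro h
          refine ⟨?_, h⟩
          have : Function.IsPeriodicPt g n x := by
            rw [Function.isPeriodicPt_iff_minimalPeriod_dvd, h]
            exact hd.1
          exact this
      rw [this]
      simp only [hf]
      rw [Set.ncard_eq_toFinset_card _ (hTfin d hdpos)]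
    calc ∑ d ∈ n.divisors, f d
        = ∑ d ∈ n.divisors, (((hfin n hn).toFinset.filter
            (fun x => Function.minimalPeriod g x = d)).card : ℤ) := by
          exact (Finset.sum_congr rfl hfib).symm
      _ = (((hfin n hn).toFinset.card : ℕ) : ℤ) := by
          rw [key]; push_cast; ring
      _ = ({x : S | g^[n] x = x}.ncard : ℤ) := by rw [hA]
  -- Step 2: Möbius inversion.
  have hinv := (ArithmeticFunction.sum_eq_iff_sum_mul_moebius_eq (R := ℤ)
      (f := f) (g := φ)).1 hsum m hm
  have hPhi : Phi1 m φ = f m := by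
    rw [Phi1]
    rw [Finset.sum_filter_of_ne (by
      intro d _ hd0
      by_contra hsq
      exact hd0 (by rw [ArithmeticFunction.moebius_eq_zero_of_not_squarefree hsq]; ring))]
    rw [← hinv, ← Nat.sum_divisorsAntidiagonal
      (fun d e => ((ArithmeticFunction.moebius d : ℤ)) * φ e)]
    exact Finset.sum_congr rfl (fun x _ => by push_cast; ring)
  rw [hPhi]
  -- Step 3: m divides the number of points of exact period m (orbit counting).
  set t : Finset S := (hTfin m hm).toFinset with ht
  have hfm : f m = (t.card : ℤ) := by
    simp only [hf, ht]
    rw [Set.ncard_eq_toFinset_card _ (hTfin m hm)]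
  rw [hfm]
  rw [Int.natCast_dvd_natCast]
  -- the orbit finset map
  set π : S → Finset S := fun x => (Finset.range m).image (fun k => g^[k] x) with hπ
  have hmem_t : ∀ x, x ∈ t ↔ Function.minimalPeriod g x = m := by
    intro x; rw [ht, Set.Finite.mem_toFinset]; rfl
  have hcardπ : ∀ x ∈ t, (π x).card = m := by
    intro x hx
    rw [hmem_t] at hx
    rw [hπ]
    rw [Finset.card_image_of_injOn, Finset.card_range]
    intro a ha b hb hab
    simp only [Finset.coe_range, Set.mem_Iio] at ha hb
    exact Function.iterate_injOn_Iio_minimalPeriod (by rw [hx]; exact ha)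
      (by rw [hx]; exact hb) hab
  have hper : ∀ x ∈ t, Function.IsPeriodicPt g m x := by
    intro x hx
    rw [hmem_t] at hx
    rw [Function.isPeriodicPt_iff_minimalPeriod_dvd, hx]
  -- the key fiber computation
  have hfiber : ∀ b ∈ t.image π, (t.filter (fun y => π y = b)).card = m := by
    intro b hb
    rw [Finset.mem_image] at hb
    obtain ⟨x, hx, rfl⟩ := hb
    have hxpp : x ∈ Function.periodicPts g :=
      Function.mk_mem_periodicPts hm (hper x hx)
    have horb_eq : ∀ y ∈ π x, π y = π x := by
      intro y hy
      rw [hπ, Finset.mem_image] at hy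
      obtain ⟨k, hk, rfl⟩ := hy
      have hyt : g^[k] x ∈ t := by
        rw [hmem_t, Function.minimalPeriod_apply_iterate hxpp]
        rw [← hmem_t]; exact hx
      apply Finset.eq_of_subset_of_card_le
      · intro z hz
        rw [hπ, Finset.mem_image] at hz ⊢
        obtain ⟨i, hi, rfl⟩ := hz
        refine ⟨(i + k) % m, Finset.mem_range.2 (Nat.mod_lt _ hm), ?_⟩
        rw [Function.IsPeriodicPt.iterate_mod_apply (hper x hx)]
        rw [Function.iterate_add_apply]
      · rw [hcardπ x hx, hcardπ _ hyt]
    have hmemself : ∀ y ∈ t, y ∈ π y := by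
      intro y _
      rw [hπ, Finset.mem_image]
      exact ⟨0, Finset.mem_range.2 hm, rfl⟩
    have : t.filter (fun y => π y = π x) = π x := by
      ext y
      simp only [Finset.mem_filter]
      constructor
      · rintro ⟨hyt, hyx⟩
        rw [← hyx]; exact hmemself y hyt
      · intro hy
        have hyx := horb_eq y hy
        refine ⟨?_, hyx⟩
        rw [hπ, Finset.mem_image] at hy
        obtain ⟨k, _, rfl⟩ := hy
        rw [hmem_t, Function.minimalPeriod_apply_iterate hxpp, ← hmem_t]
        exact hx
    rw [this, hcardπ x hx]
  have hcount : t.card = (t.image π).card * m := by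
    rw [Finset.card_eq_sum_card_fiberwise (f := π) (t := t.image π)
      (fun x hx => Finset.mem_image_of_mem π hx)]
    rw [Finset.sum_congr rfl hfiber, Finset.sum_const, smul_eq_mul]
  exact ⟨(t.image π).card, by rw [hcount]; ring⟩
end

section
/- Let S ⊆ ℝ be a set with 0 ∈ S and −S = S, and let g : S → S be an odd map (g(−x) = −g(x) for all x ∈ S) such that for every positive integer m the set {x ∈ S : g^m(x) = −x} is finite; let ψ(m) denote its cardinality. Then for every positive integer m, the number of symmetric periodic points of g with least period 2m (i.e., periodic points of least period 2m whose orbit O under g satisfies −O = O) equals Φ₂(m, ψ). -/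
open scoped Classical

/-- `Phi2 m ψ = ψ(m) - 1` if `m` is a power of 2, and otherwise
`∑_{d ∣ m, d odd and squarefree} μ(d) · ψ(m/d)`. -/
noncomputable def Phi2 (m : ℕ) (ψ : ℕ → ℤ) : ℤ :=
  if ∃ i : ℕ, m = 2 ^ i then ψ m - 1
  else ∑ d ∈ m.divisors.filter (fun d => Odd d ∧ Squarefree d),
    (ArithmeticFunction.moebius d) * ψ (m / d)

open Function

section Dyn

variable {S : Set ℝ} {g : ℝ → ℝ}

lemma iter_mem (hmaps : ∀ x ∈ S, g x ∈ S) :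
    ∀ (n : ℕ) (x : ℝ), x ∈ S → g^[n] x ∈ S := by
  intro n
  induction n with
  | zero => intro x hx; simpa using hx
  | succ n ih =>
      intro x hx
      rw [Function.iterate_succ_apply]
      exact ih _ (hmaps x hx)

lemma iter_odd (hmaps : ∀ x ∈ S, g x ∈ S) (hodd : ∀ x ∈ S, g (-x) = - g x) :
    ∀ (n : ℕ) (x : ℝ), x ∈ S → g^[n] (-x) = - g^[n] x := by
  intro n
  induction n with
  | zero => simp
  | succ n ih =>
      intro x hx
      rw [Function.iterate_succ_apply, Function.iterate_succ_apply, hodd x hx,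
        ih _ (hmaps x hx)]

lemma g_zero (h0 : (0:ℝ) ∈ S) (hodd : ∀ x ∈ S, g (-x) = - g x) : g 0 = 0 := by
  have := hodd 0 h0
  rw [neg_zero] at this
  exact eq_zero_of_neg_eq this.symm

lemma iter_zero (h0 : (0:ℝ) ∈ S) (hodd : ∀ x ∈ S, g (-x) = - g x) (n : ℕ) :
    g^[n] 0 = 0 :=
  Function.iterate_fixed (g_zero h0 hodd) n

end Dyn

/-- Symmetric periodic points with least period `2*k`. -/
def SPset (g : ℝ → ℝ) (S : Set ℝ) (k : ℕ) : Set ℝ :=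
  {x : ℝ | x ∈ S ∧ g^[2 * k] x = x ∧
    (∀ j : ℕ, 0 < j → j < 2 * k → g^[j] x ≠ x) ∧
    (∀ y : ℝ, (∃ a : ℕ, g^[a] x = y) ↔ (∃ a : ℕ, g^[a] x = -y))}

/-- Alternative description. -/
def Tset (g : ℝ → ℝ) (S : Set ℝ) (k : ℕ) : Set ℝ :=
  {x : ℝ | x ∈ S ∧ g^[k] x = -x ∧ Function.minimalPeriod g x = 2 * k}

lemma SP_eq_T {S : Set ℝ} {g : ℝ → ℝ}
    (h0 : (0:ℝ) ∈ S) (hmaps : ∀ x ∈ S, g x ∈ S)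
    (hodd : ∀ x ∈ S, g (-x) = - g x) {k : ℕ} (hk : 0 < k) :
    SPset g S k = Tset g S k := by
  ext x
  constructor
  · rintro ⟨hxS, hper, hmin, hsym⟩
    have hP : IsPeriodicPt g (2 * k) x := hper
    have hmp : Function.minimalPeriod g x = 2 * k := by
      have h1 : Function.minimalPeriod g x ≤ 2 * k := hP.minimalPeriod_le (by omega)
      have h2 : 0 < Function.minimalPeriod g x := hP.minimalPeriod_pos (by omega)
      by_contra h
      exact hmin _ h2 (lt_of_le_of_ne h1 h) (isPeriodicPt_minimalPeriod g x)
    have hx0 : x ≠ 0 := by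
      intro h
      subst h
      exact hmin 1 one_pos (by omega) (by simpa using g_zero h0 hodd)
    obtain ⟨a, ha⟩ := (hsym x).mp ⟨0, rfl⟩
    have hb : g^[a % (2 * k)] x = -x := by
      have := Function.iterate_mod_minimalPeriod_eq (f := g) (x := x) (n := a)
      rw [hmp] at this
      rw [this, ha]
    set b := a % (2 * k) with hbdef
    have hbne : b ≠ 0 := by
      intro h
      rw [h] at hb
      simp only [Function.iterate_zero_apply] at hb
      exact hx0 (eq_zero_of_neg_eq hb.symm)
    have hblt : b < 2 * k := Nat.mod_lt _ (by omega)
    have h2b : IsPeriodicPt g (2 * b) x := by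
      show g^[2 * b] x = x
      rw [two_mul, Function.iterate_add_apply, hb, iter_odd hmaps hodd b x hxS, hb, neg_neg]
    have hdvd : 2 * k ∣ 2 * b := by
      rw [← hmp]; exact h2b.minimalPeriod_dvd
    have hbk : b = k := by
      have hkb : k ∣ b := (Nat.mul_dvd_mul_iff_left (by norm_num : 0 < 2)).mp hdvd
      obtain ⟨c, hc⟩ := hkb
      have hclt : c < 2 := by
        have : k * c < k * 2 := by omega
        exact Nat.lt_of_mul_lt_mul_left this
      have hc0 : c ≠ 0 := by rintro rfl; omega
      have : c = 1 := by omega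
      subst this
      omega
    rw [hbk] at hb
    exact ⟨hxS, hb, hmp⟩
  · rintro ⟨hxS, hk2, hmp⟩
    have hper : IsPeriodicPt g (2 * k) x := by
      rw [← hmp]; exact isPeriodicPt_minimalPeriod g x
    refine ⟨hxS, hper, ?_, ?_⟩
    · intro j hj hjlt hfix
      have hfix' : IsPeriodicPt g j x := hfix
      have := hfix'.minimalPeriod_le hj
      omega
    · intro y
      have fwd : ∀ z : ℝ, (∃ a : ℕ, g^[a] x = z) → (∃ a : ℕ, g^[a] x = -z) := by
        rintro z ⟨a, rfl⟩
        exact ⟨a + k, by rw [Function.iterate_add_apply, hk2, iter_odd hmaps hodd a x hxS]⟩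
      refine ⟨fwd y, fun h => ?_⟩
      obtain ⟨a, ha⟩ := fwd (-y) h
      exact ⟨a, by rw [ha, neg_neg]⟩

lemma ncard_biUnion' {α β : Type*} (D : Finset α) (T : α → Set β)
    (hfin : ∀ a ∈ D, (T a).Finite)
    (hdisj : ∀ a ∈ D, ∀ b ∈ D, a ≠ b → Disjoint (T a) (T b)) :
    (⋃ a ∈ D, T a).ncard = ∑ a ∈ D, (T a).ncard := by
  classical
  induction D using Finset.induction_on with
  | empty => simp
  | @insert a s ha ih =>
      have hfu : (⋃ x ∈ s, T x).Finite :=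
        Set.Finite.biUnion s.finite_toSet
          (fun b hb => hfin b (Finset.mem_insert_of_mem hb))
      have hdj : Disjoint (T a) (⋃ x ∈ s, T x) := by
        simp only [Set.disjoint_iUnion_right]
        intro b hb
        exact hdisj a (Finset.mem_insert_self a s) b (Finset.mem_insert_of_mem hb)
          (fun h => ha (h ▸ hb))
      rw [Finset.set_biUnion_insert, Finset.sum_insert ha,
        Set.ncard_union_eq hdj (hfin a (Finset.mem_insert_self a s)) hfu,
        ih (fun b hb => hfin b (Finset.mem_insert_of_mem hb))
          (fun b hb c hc hbc => hdisj b (Finset.mem_insert_of_mem hb)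
            c (Finset.mem_insert_of_mem hc) hbc)]

lemma dvd_half_eq {k b : ℕ} (hk : 0 < k) (hb : b ≠ 0) (hlt : b < 2 * k)
    (h : 2 * k ∣ 2 * b) : b = k := by
  have hkb : k ∣ b := (Nat.mul_dvd_mul_iff_left (by norm_num : 0 < 2)).mp h
  obtain ⟨c, hc⟩ := hkb
  have hclt : c < 2 := by
    have : k * c < k * 2 := by omega
    exact Nat.lt_of_mul_lt_mul_left this
  have hc0 : c ≠ 0 := by rintro rfl; omega
  have : c = 1 := by omega
  subst this
  omega

lemma count_lemma {S : Set ℝ} {g : ℝ → ℝ}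
    (h0 : (0:ℝ) ∈ S) (hmaps : ∀ x ∈ S, g x ∈ S)
    (hodd : ∀ x ∈ S, g (-x) = - g x)
    (hfin : ∀ m : ℕ, 0 < m → {x : ℝ | x ∈ S ∧ g^[m] x = -x}.Finite)
    {m : ℕ} (hm : 0 < m) :
    ({x : ℝ | x ∈ S ∧ g^[m] x = -x}.ncard : ℤ)
      = 1 + ∑ k ∈ m.divisors.filter (fun k => Odd (m / k)),
          ((Tset g S k).ncard : ℤ) := by
  classical
  set D := m.divisors.filter (fun k => Odd (m / k)) with hD
  have hpos : ∀ k ∈ D, 0 < k := fun k hk =>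
    Nat.pos_of_mem_divisors (Finset.mem_filter.mp hk).1
  have hTfin : ∀ k ∈ D, (Tset g S k).Finite := fun k hk =>
    (hfin k (hpos k hk)).subset (fun x hx => ⟨hx.1, hx.2.1⟩)
  have hsplit : {x : ℝ | x ∈ S ∧ g^[m] x = -x}
      = insert (0:ℝ) (⋃ k ∈ D, Tset g S k) := by
    ext x
    simp only [Set.mem_setOf_eq, Set.mem_insert_iff, Set.mem_iUnion, exists_prop]
    constructor
    · rintro ⟨hxS, hx⟩
      by_cases hx0 : x = 0
      · left; exact hx0
      right
      have h2m : IsPeriodicPt g (2 * m) x := by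
        show g^[2 * m] x = x
        rw [two_mul, Function.iterate_add_apply, hx, iter_odd hmaps hodd m x hxS,
          hx, neg_neg]
      have hp0 : 0 < Function.minimalPeriod g x := h2m.minimalPeriod_pos (by omega)
      have hpdvd : Function.minimalPeriod g x ∣ 2 * m := h2m.minimalPeriod_dvd
      have hpeven : 2 ∣ Function.minimalPeriod g x := by
        by_contra hpe
        have hpodd : Odd (Function.minimalPeriod g x) := by
          rw [Nat.odd_iff]; omega
        have hcop : Nat.Coprime (Function.minimalPeriod g x) 2 :=
          Nat.coprime_two_right.mpr hpodd
        have hpm : Function.minimalPeriod g x ∣ m := by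
          rcases hcop.dvd_of_dvd_mul_left (by rwa [mul_comm] at hpdvd) with h
          exact h
        have hfixm : g^[m] x = x := isPeriodicPt_iff_minimalPeriod_dvd.mpr hpm
        have : -x = x := hx ▸ hfixm
        exact hx0 (eq_zero_of_neg_eq this)
      obtain ⟨k, hk⟩ := hpeven
      have hk0 : 0 < k := by omega
      have hb : g^[m % (2 * k)] x = -x := by
        have h := Function.iterate_mod_minimalPeriod_eq (f := g) (x := x) (n := m)
        rw [hk] at h
        rw [h, hx]
      set b := m % (2 * k) with hbdef
      have hbne : b ≠ 0 := by
        intro h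
        rw [h] at hb
        simp only [Function.iterate_zero_apply] at hb
        exact hx0 (eq_zero_of_neg_eq hb.symm)
      have hblt : b < 2 * k := Nat.mod_lt _ (by omega)
      have h2b : IsPeriodicPt g (2 * b) x := by
        show g^[2 * b] x = x
        rw [two_mul, Function.iterate_add_apply, hb, iter_odd hmaps hodd b x hxS,
          hb, neg_neg]
      have hdvd : 2 * k ∣ 2 * b := by rw [← hk]; exact h2b.minimalPeriod_dvd
      have hbk : b = k := dvd_half_eq hk0 hbne hblt hdvd
      have hmod : m % (2 * k) = k := by omega
      have h1 := Nat.div_add_mod m (2 * k)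
      rw [hmod] at h1
      have hkdvd : k ∣ m := by
        refine ⟨2 * (m / (2 * k)) + 1, ?_⟩
        calc m = 2 * k * (m / (2 * k)) + k := h1.symm
          _ = k * (2 * (m / (2 * k)) + 1) := by ring
      have hmeq : m = k * (2 * (m / (2 * k)) + 1) := by
        calc m = 2 * k * (m / (2 * k)) + k := h1.symm
          _ = k * (2 * (m / (2 * k)) + 1) := by ring
      have hoddq : Odd (m / k) := by
        have hmeq' : m = (2 * (m / (2 * k)) + 1) * k := by
          conv_lhs => rw [hmeq]
          ring
        have : m / k = 2 * (m / (2 * k)) + 1 :=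
          Nat.div_eq_of_eq_mul_left hk0 hmeq'
        rw [this]
        exact ⟨_, rfl⟩
      rw [hbk] at hb
      exact ⟨k, Finset.mem_filter.mpr ⟨Nat.mem_divisors.mpr ⟨hkdvd, hm.ne'⟩, hoddq⟩,
        hxS, hb, hk⟩
    · rintro (rfl | ⟨k, hkD, hxS, hkx, hmp⟩)
      · exact ⟨h0, by rw [iter_zero h0 hodd, neg_zero]⟩
      · obtain ⟨hkdvd, hoddq⟩ := Finset.mem_filter.mp hkD
        have hkdvd' : k ∣ m := (Nat.mem_divisors.mp hkdvd).1
        have hk0 : 0 < k := Nat.pos_of_mem_divisors hkdvd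
        obtain ⟨t, ht⟩ := hoddq
        have hmc := Nat.div_mul_cancel hkdvd'
        rw [ht] at hmc
        have hmval : m = k + 2 * k * t := by
          have : (2 * t + 1) * k = k + 2 * k * t := by ring
          omega
        refine ⟨hxS, ?_⟩
        have hP2k : IsPeriodicPt g (2 * k) x := by
          rw [← hmp]; exact isPeriodicPt_minimalPeriod g x
        have hP : IsPeriodicPt g (2 * k * t) x := hP2k.mul_const t
        rw [hmval, Function.iterate_add_apply, (hP : g^[2 * k * t] x = x), hkx]
  rw [hsplit]
  have hUfin : (⋃ k ∈ D, Tset g S k).Finite :=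
    Set.Finite.biUnion D.finite_toSet hTfin
  have h0not : (0:ℝ) ∉ ⋃ k ∈ D, Tset g S k := by
    simp only [Set.mem_iUnion, exists_prop, not_exists, not_and]
    rintro k hkD ⟨_, _, hmp⟩
    have hk0 : 0 < k := hpos k hkD
    have h1 : IsPeriodicPt g 1 (0:ℝ) := by
      show g^[1] (0:ℝ) = 0
      simpa using g_zero h0 hodd
    have h2 := h1.minimalPeriod_dvd
    rw [hmp] at h2
    have := Nat.le_of_dvd one_pos h2
    omega
  have hdisj : ∀ a ∈ D, ∀ b ∈ D, a ≠ b → Disjoint (Tset g S a) (Tset g S b) := by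
    intro a _ b _ hab
    rw [Set.disjoint_left]
    rintro x ⟨_, _, hpa⟩ ⟨_, _, hpb⟩
    rw [hpa] at hpb
    exact hab (by omega)
  rw [Set.ncard_insert_of_notMem h0not hUfin, ncard_biUnion' D _ hTfin hdisj]
  push_cast
  ring

lemma odd_of_dvd' {d n : ℕ} (h : d ∣ n) (ho : Odd n) : Odd d := by
  rw [Nat.odd_iff] at ho ⊢
  by_contra hc
  have h2d : (2:ℕ) ∣ d := by omega
  have h2n : (2:ℕ) ∣ n := h2d.trans h
  omega

lemma filter_odd_divisors_eq_image (a : ℕ) {n : ℕ} (hn : 0 < n) (hodd : Odd n) :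
    (2 ^ a * n).divisors.filter (fun k => Odd (2 ^ a * n / k))
      = n.divisors.image (fun e => 2 ^ a * e) := by
  ext k
  simp only [Finset.mem_filter, Nat.mem_divisors, Finset.mem_image]
  constructor
  · rintro ⟨⟨hdvd, hne⟩, hoddq⟩
    have hkr : k * (2 ^ a * n / k) = 2 ^ a * n := Nat.mul_div_cancel' hdvd
    have hcop : Nat.Coprime (2 ^ a) (2 ^ a * n / k) :=
      Nat.Coprime.pow_left _ (Nat.coprime_two_left.mpr hoddq)
    have h2a : 2 ^ a ∣ k :=
      hcop.dvd_of_dvd_mul_right (by rw [hkr]; exact dvd_mul_right _ _)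
    obtain ⟨e, he⟩ := h2a
    set r := 2 ^ a * n / k with hrdef
    have hr : 2 ^ a * (e * r) = 2 ^ a * n := by
      conv_rhs => rw [← hkr, he]
      ring
    have hen : e * r = n :=
      Nat.eq_of_mul_eq_mul_left (pow_pos two_pos a) hr
    exact ⟨e, ⟨⟨_, hen.symm⟩, hn.ne'⟩, he.symm⟩
  · rintro ⟨e, ⟨hedvd, _⟩, rfl⟩
    have h2pos : 0 < 2 ^ a := pow_pos two_pos a
    refine ⟨⟨mul_dvd_mul_left _ hedvd, by positivity⟩, ?_⟩
    rw [Nat.mul_div_mul_left _ _ h2pos]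
    exact odd_of_dvd' (Nat.div_dvd_of_dvd hedvd) hodd

lemma inversion_lemma (s f : ℕ → ℤ)
    (h : ∀ n : ℕ, 0 < n → f n = ∑ k ∈ n.divisors.filter (fun k => Odd (n / k)), s k)
    (m : ℕ) (hm : 0 < m) :
    s m = ∑ d ∈ (m / 2 ^ (m.factorization 2)).divisors,
      (ArithmeticFunction.moebius d : ℤ) * f (m / d) := by
  classical
  set a := m.factorization 2 with ha
  set q := m / 2 ^ a with hqdef
  have hmq : 2 ^ a * q = m := Nat.ordProj_mul_ordCompl_eq_self m 2
  have hq_pos : 0 < q := Nat.ordCompl_pos 2 hm.ne'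
  have hq_odd : Odd q := by
    have h2 : ¬ 2 ∣ q := by
      rw [hqdef, ha]
      exact Nat.not_dvd_ordCompl Nat.prime_two hm.ne'
    rw [Nat.odd_iff]
    omega
  have H : ∀ n : ℕ, 0 < n → n ∈ {n : ℕ | Odd n} →
      (∑ e ∈ n.divisors, s (2 ^ a * e)) = f (2 ^ a * n) := by
    intro n hn hnodd
    rw [h (2 ^ a * n) (by positivity), filter_odd_divisors_eq_image a hn hnodd,
      Finset.sum_image
        (fun x _ y _ hxy => Nat.eq_of_mul_eq_mul_left (pow_pos two_pos a) hxy)]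
  have hkey := (ArithmeticFunction.sum_eq_iff_sum_smul_moebius_eq_on
      {n : ℕ | Odd n} (fun x y hxy hy => odd_of_dvd' hxy hy)).mp H q hq_pos hq_odd
  rw [hmq] at hkey
  rw [← hkey,
    Nat.sum_divisorsAntidiagonal
      (f := fun d e => (ArithmeticFunction.moebius d : ℤ) • f (2 ^ a * e))]
  refine Finset.sum_congr rfl (fun d hd => ?_)
  have hd' : d ∣ q := (Nat.mem_divisors.mp hd).1
  have hmd : m / d = 2 ^ a * (q / d) := by rw [← hmq, Nat.mul_div_assoc _ hd']
  rw [smul_eq_mul, hmd]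

/-- For an odd map `g` on a symmetric set `S ⊆ ℝ` containing `0`, the number of symmetric
periodic points of `g` with least period `2m` equals `Φ₂(m, ψ)`, where `ψ(m)` is the number
of solutions of `g^m(x) = -x` in `S`. -/
theorem statement2 (S : Set ℝ) (h0 : (0 : ℝ) ∈ S)
    (hS : ∀ x : ℝ, x ∈ S ↔ -x ∈ S)
    (g : ℝ → ℝ) (hmaps : ∀ x ∈ S, g x ∈ S)
    (hodd : ∀ x ∈ S, g (-x) = - g x)
    (hfin : ∀ m : ℕ, 0 < m → {x : ℝ | x ∈ S ∧ g^[m] x = -x}.Finite)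
    (ψ : ℕ → ℤ)
    (hψ : ∀ m : ℕ, 0 < m → ψ m = ({x : ℝ | x ∈ S ∧ g^[m] x = -x}.ncard : ℤ))
    (m : ℕ) (hm : 0 < m) :
    ({x : ℝ | x ∈ S ∧ g^[2 * m] x = x ∧
        (∀ j : ℕ, 0 < j → j < 2 * m → g^[j] x ≠ x) ∧
        (∀ y : ℝ, (∃ k : ℕ, g^[k] x = y) ↔ (∃ k : ℕ, g^[k] x = -y))}.ncard : ℤ)
      = Phi2 m ψ := by
  classical
  have hset : {x : ℝ | x ∈ S ∧ g^[2 * m] x = x ∧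
        (∀ j : ℕ, 0 < j → j < 2 * m → g^[j] x ≠ x) ∧
        (∀ y : ℝ, (∃ k : ℕ, g^[k] x = y) ↔ (∃ k : ℕ, g^[k] x = -y))} = SPset g S m := rfl
  rw [hset, SP_eq_T h0 hmaps hodd hm]
  have hrel : ∀ n : ℕ, 0 < n → (fun n => ψ n - 1) n
      = ∑ k ∈ n.divisors.filter (fun k => Odd (n / k)),
          (fun k => ((Tset g S k).ncard : ℤ)) k := by
    intro n hn
    simp only
    rw [hψ n hn, count_lemma h0 hmaps hodd hfin hn]
    ring
  have hinv := inversion_lemma (fun k => ((Tset g S k).ncard : ℤ))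
    (fun n => ψ n - 1) hrel m hm
  rw [hinv]
  set a := m.factorization 2 with ha
  set q := m / 2 ^ a with hqdef
  have hmq : 2 ^ a * q = m := Nat.ordProj_mul_ordCompl_eq_self m 2
  have hq_pos : 0 < q := Nat.ordCompl_pos 2 hm.ne'
  have hq_odd : Odd q := by
    have h2 : ¬ 2 ∣ q := by
      rw [hqdef, ha]
      exact Nat.not_dvd_ordCompl Nat.prime_two hm.ne'
    rw [Nat.odd_iff]
    omega
  unfold Phi2
  by_cases hpow : ∃ i : ℕ, m = 2 ^ i
  · rw [if_pos hpow]
    have hq1 : q = 1 := by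
      obtain ⟨i, hi⟩ := hpow
      have hqm : q ∣ m := by rw [hqdef, ha]; exact Nat.ordCompl_dvd m 2
      rw [hi] at hqm
      have hcop : Nat.Coprime q (2 ^ i) :=
        (Nat.coprime_two_right.mpr hq_odd).pow_right i
      exact hcop.eq_one_of_dvd hqm
    rw [hq1]
    simp [ArithmeticFunction.moebius_apply_one]
  · rw [if_neg hpow]
    have hq1 : q ≠ 1 := fun h => hpow ⟨a, by rw [← hmq, h, mul_one]⟩
    have hfilter : m.divisors.filter (fun d => Odd d ∧ Squarefree d)
        = q.divisors.filter (fun d => Squarefree d) := by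
      ext d
      simp only [Finset.mem_filter, Nat.mem_divisors]
      constructor
      · rintro ⟨⟨hdm, _⟩, hoddd, hsf⟩
        have hcop : Nat.Coprime d (2 ^ a) :=
          (Nat.coprime_two_right.mpr hoddd).pow_right a
        have hdd : d ∣ 2 ^ a * q := by rw [hmq]; exact hdm
        exact ⟨⟨hcop.dvd_of_dvd_mul_left hdd, hq_pos.ne'⟩, hsf⟩
      · rintro ⟨⟨hdq, _⟩, hsf⟩
        exact ⟨⟨hdq.trans ⟨2 ^ a, by rw [← hmq]; ring⟩, hm.ne'⟩,
          odd_of_dvd' hdq hq_odd, hsf⟩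
    have hdrop : ∑ d ∈ q.divisors.filter (fun d => Squarefree d),
          (ArithmeticFunction.moebius d : ℤ) * ψ (m / d)
        = ∑ d ∈ q.divisors, (ArithmeticFunction.moebius d : ℤ) * ψ (m / d) := by
      apply Finset.sum_filter_of_ne
      intro d _ hne
      by_contra hsf
      exact hne (by
        rw [ArithmeticFunction.moebius_eq_zero_of_not_squarefree hsf]; ring)
    have hmoeb0 : ∑ d ∈ q.divisors, (ArithmeticFunction.moebius d : ℤ) = 0 := by
      calc ∑ d ∈ q.divisors, (ArithmeticFunction.moebius d : ℤ)
          = (ArithmeticFunction.moebius * ArithmeticFunction.zeta :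
              ArithmeticFunction ℤ) q := ArithmeticFunction.coe_mul_zeta_apply.symm
        _ = (1 : ArithmeticFunction ℤ) q := by
            rw [ArithmeticFunction.moebius_mul_coe_zeta]
        _ = 0 := ArithmeticFunction.one_apply_ne hq1
    rw [hfilter, hdrop]
    have hsplit2 : ∑ d ∈ q.divisors,
          (ArithmeticFunction.moebius d : ℤ) * (ψ (m / d) - 1)
        = (∑ d ∈ q.divisors, (ArithmeticFunction.moebius d : ℤ) * ψ (m / d))
          - ∑ d ∈ q.divisors, (ArithmeticFunction.moebius d : ℤ) := by
      rw [← Finset.sum_sub_distrib]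
      exact Finset.sum_congr rfl (fun d _ => by ring)
    rw [hsplit2, hmoeb0, sub_zero]
end

section
/- Let S ⊆ ℝ be a set with 0 ∈ S and −S = S, and let g : S → S be an odd map (g(−x) = −g(x) for all x ∈ S) such that for every positive integer m the set {x ∈ S : g^m(x) = −x} is finite; let ψ(m) denote its cardinality. Then for every positive integer m, Φ₂(m, ψ) ≡ 0 (mod 2m), i.e., 2m divides Φ₂(m, ψ). -/
open scoped Classical
open Finset Function ArithmeticFunction

section auxStatement3

lemma aux_sum_moebius (q : ℕ) :
    ∑ d ∈ q.divisors.filter Squarefree, (moebius d : ℤ) = if q = 1 then 1 else 0 := by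
  rw [Finset.sum_filter_of_ne (fun d _ h => moebius_ne_zero_iff_squarefree.mp h)]
  have h := congrArg (fun f : ArithmeticFunction ℤ => f q) moebius_mul_coe_zeta
  simp only [coe_mul_zeta_apply, one_apply] at h
  exact h

lemma aux_odd_of_dvd {d q : ℕ} (hdq : d ∣ q) (hqo : Odd q) : Odd d := by
  obtain ⟨e, rfl⟩ := hdq
  exact (Nat.odd_mul.mp hqo).1

lemma aux_filter_eq (m q : ℕ) (hm : m ≠ 0) (hq : q ∣ m) (hqo : Odd q) :
    (m.divisors.filter (fun d => Odd d ∧ Squarefree d)).filter (· ∣ q)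
      = q.divisors.filter Squarefree := by
  have hq0 : q ≠ 0 := by rintro rfl; exact hm (Nat.eq_zero_of_zero_dvd hq)
  ext d
  simp only [Finset.mem_filter, Nat.mem_divisors]
  constructor
  · rintro ⟨⟨⟨hdm, _⟩, _, hsq⟩, hdq⟩
    exact ⟨⟨hdq, hq0⟩, hsq⟩
  · rintro ⟨⟨hdq, -⟩, hsq⟩
    exact ⟨⟨⟨hdq.trans hq, hm⟩, aux_odd_of_dvd hdq hqo, hsq⟩, hdq⟩

lemma aux_core (m n : ℕ) (hm : 0 < m) (h1 : n ∣ 2 * m) (h2 : ¬ n ∣ m) :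
    ∑ d ∈ m.divisors.filter (fun d => Odd d ∧ Squarefree d),
      (if n ∣ 2 * (m / d) ∧ ¬ n ∣ (m / d) then (moebius d : ℤ) else 0)
    = if n = 2 * m then 1 else 0 := by
  have hn0 : 0 < n := by
    rcases Nat.eq_zero_or_pos n with rfl | h
    · exact absurd (Nat.eq_zero_of_zero_dvd h1) (by omega)
    · exact h
  obtain ⟨q, hq⟩ := h1
  have hq0 : q ≠ 0 := by rintro rfl; simp at hq; omega
  have hqodd : Odd q := by
    rcases Nat.even_or_odd q with ⟨e, rfl⟩ | ho
    · refine absurd ⟨e, ?_⟩ h2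
      have h' : 2 * m = 2 * (n * e) := by rw [hq]; ring
      omega
    · exact ho
  have hqm : q ∣ m := by
    have h2q : q ∣ m * 2 := ⟨n, by rw [mul_comm q n, ← hq]; ring⟩
    exact (hqodd.coprime_two_right).dvd_of_dvd_mul_right h2q
  have hcond : ∀ d ∈ m.divisors.filter (fun d => Odd d ∧ Squarefree d),
      ((n ∣ 2 * (m / d) ∧ ¬ n ∣ (m / d)) ↔ d ∣ q) := by
    rintro d hd
    rw [Finset.mem_filter, Nat.mem_divisors] at hd
    obtain ⟨⟨hdm, -⟩, hdodd, -⟩ := hd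
    have hd0 : 0 < d := Nat.pos_of_dvd_of_pos hdm hm
    have hmd : m / d * d = m := Nat.div_mul_cancel hdm
    constructor
    · rintro ⟨⟨c, hc⟩, -⟩
      have : n * q = n * (c * d) := by
        calc n * q = 2 * m := hq.symm
        _ = 2 * (m / d) * d := by rw [mul_assoc, hmd]
        _ = n * c * d := by rw [hc]
        _ = n * (c * d) := by ring
      have hqcd : q = c * d := Nat.eq_of_mul_eq_mul_left hn0 this
      exact Dvd.intro_left c hqcd.symm
    · rintro ⟨e, he⟩
      have h2md : 2 * (m / d) = n * e := by
        have : 2 * (m / d) * d = n * e * d := by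
          rw [mul_assoc, hmd, hq, he]; ring
        exact Nat.eq_of_mul_eq_mul_right hd0 this
      refine ⟨⟨e, h2md⟩, ?_⟩
      rintro ⟨f, hf⟩
      have : n * e = n * (2 * f) := by rw [← h2md, hf]; ring
      have he2 : e = 2 * f := Nat.eq_of_mul_eq_mul_left hn0 this
      have hoe : Odd e := (Nat.odd_mul.mp (he ▸ hqodd)).2
      rw [Nat.odd_iff, he2] at hoe
      omega
  rw [Finset.sum_congr rfl (fun d hd => if_congr (hcond d hd) rfl rfl), ← Finset.sum_filter,
    aux_filter_eq m q hm.ne' hqm hqodd, aux_sum_moebius q]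
  congr 1
  simp only [eq_iff_iff]
  constructor
  · rintro rfl; omega
  · rintro rfl
    have : 2 * m * q = 2 * m * 1 := by omega
    exact Nat.eq_of_mul_eq_mul_left (by omega) this

lemma aux_iter_mem {S : Set ℝ} {g : ℝ → ℝ} (hmaps : ∀ x ∈ S, g x ∈ S) :
    ∀ k : ℕ, ∀ x ∈ S, g^[k] x ∈ S := by
  intro k
  induction k with
  | zero => intro x hx; simpa using hx
  | succ k ih =>
    intro x hx
    rw [Function.iterate_succ_apply]
    exact ih (g x) (hmaps x hx)

lemma aux_iter_odd {S : Set ℝ} {g : ℝ → ℝ} (hmaps : ∀ x ∈ S, g x ∈ S)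
    (hS : ∀ x : ℝ, x ∈ S ↔ -x ∈ S) (hodd : ∀ x ∈ S, g (-x) = - g x) :
    ∀ k : ℕ, ∀ x ∈ S, g^[k] (-x) = -(g^[k] x) := by
  intro k
  induction k with
  | zero => intro x _; simp
  | succ k ih =>
    intro x hx
    rw [Function.iterate_succ_apply, Function.iterate_succ_apply, hodd x hx,
      ih (g x) (hmaps x hx)]

lemma aux_key {S : Set ℝ} {g : ℝ → ℝ} (hmaps : ∀ x ∈ S, g x ∈ S)
    (hS : ∀ x : ℝ, x ∈ S ↔ -x ∈ S) (hodd : ∀ x ∈ S, g (-x) = - g x)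
    {x : ℝ} (hxS : x ∈ S) (hx0 : x ≠ 0)
    {m₀ : ℕ} (hbase : g^[m₀] x = -x) (j : ℕ) :
    g^[j] x = -x ↔ (minimalPeriod g x ∣ 2 * j ∧ ¬ minimalPeriod g x ∣ j) := by
  set n := minimalPeriod g x with hn
  have hneg : ∀ k : ℕ, g^[k] x = -x → IsPeriodicPt g (2 * k) x := by
    intro k hk
    show g^[2 * k] x = x
    rw [two_mul, Function.iterate_add_apply, hk, aux_iter_odd hmaps hS hodd k x hxS, hk, neg_neg]
  have hfix : ∀ k : ℕ, n ∣ k → g^[k] x = x := fun k hk =>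
    (isPeriodicPt_iff_minimalPeriod_dvd.mpr hk : IsPeriodicPt g k x)
  constructor
  · intro hj
    refine ⟨(hneg j hj).minimalPeriod_dvd, fun hdvd => ?_⟩
    have := hfix j hdvd
    rw [hj] at this
    exact hx0 (by linarith)
  · rintro ⟨h1, h2⟩
    have hb1 : n ∣ 2 * m₀ := (hneg m₀ hbase).minimalPeriod_dvd
    have hb2 : ¬ n ∣ m₀ := by
      intro h
      have := hfix m₀ h
      rw [hbase] at this
      exact hx0 (by linarith)
    have hn0 : 0 < n := by
      rcases Nat.eq_zero_or_pos n with h | h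
      · exfalso
        rw [h] at h1 h2
        have := Nat.eq_zero_of_zero_dvd h1
        exact h2 (by omega)
      · exact h
    obtain ⟨c, hc⟩ := h1
    obtain ⟨c', hc'⟩ := hb1
    have hcodd : Odd c := by
      rcases Nat.even_or_odd c with ⟨c2, hce⟩ | ho
      · exfalso
        refine h2 ⟨c2, ?_⟩
        have h' : 2 * j = 2 * (n * c2) := by rw [hc, hce]; ring
        omega
      · exact ho
    have hcodd' : Odd c' := by
      rcases Nat.even_or_odd c' with ⟨c2, hce⟩ | ho
      · exfalso
        refine hb2 ⟨c2, ?_⟩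
        have h' : 2 * m₀ = 2 * (n * c2) := by rw [hc', hce]; ring
        omega
      · exact ho
    obtain ⟨w, hw⟩ : Even (c + c') := hcodd.add_odd hcodd'
    have hjm : j + m₀ = n * w := by
      have : 2 * (j + m₀) = 2 * (n * w) := by
        calc 2 * (j + m₀) = 2 * j + 2 * m₀ := by ring
        _ = n * c + n * c' := by rw [hc, hc']
        _ = n * (c + c') := by ring
        _ = n * (w + w) := by rw [hw]
        _ = 2 * (n * w) := by ring
      omega
    have hper : g^[j + m₀] x = x := hfix _ ⟨w, hjm⟩
    rw [Function.iterate_add_apply, hbase, aux_iter_odd hmaps hS hodd j x hxS] at hper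
    linarith

lemma aux_orbit (f : ℝ → ℝ) (N : ℕ) (hN : 0 < N) :
    ∀ B : Finset ℝ, (∀ x ∈ B, minimalPeriod f x = N) → (∀ x ∈ B, f x ∈ B) →
      N ∣ B.card := by
  intro B
  induction B using Finset.strongInduction with
  | _ B ih =>
    intro hper hcl
    rcases B.eq_empty_or_nonempty with rfl | ⟨x, hx⟩
    · simp
    · have hpt : IsPeriodicPt f N x := by
        rw [← hper x hx]; exact isPeriodicPt_minimalPeriod f x
      have hiter : ∀ k : ℕ, f^[k] x ∈ B := by
        intro k
        induction k with
        | zero => simpa using hx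
        | succ k ihk => rw [Function.iterate_succ_apply']; exact hcl _ ihk
      have hmod : ∀ k : ℕ, f^[k] x = f^[k % N] x := by
        intro k
        conv_lhs => rw [← Nat.mod_add_div k N]
        rw [Nat.mul_comm, Function.iterate_add_apply]
        congr 1
        exact (hpt.const_mul (k / N) : IsPeriodicPt f ((k/N) * N) x)
      set O : Finset ℝ := (Finset.range N).image (fun k => f^[k] x) with hO
      have hOB : O ⊆ B := by
        intro y hy
        simp only [hO, Finset.mem_image] at hy
        obtain ⟨k, -, rfl⟩ := hy
        exact hiter k
      have hinj : Set.InjOn (fun k => f^[k] x) (Finset.range N) := by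
        intro i hi j hj hij0
        have hij : f^[i] x = f^[j] x := hij0
        simp only [Finset.coe_range, Set.mem_Iio] at hi hj
        rcases le_or_gt i j with h | h
        · by_contra hne
          have hlt : i < j := lt_of_le_of_ne h hne
          have : f^[N - j + i] x = x := by
            rw [Function.iterate_add_apply, hij]
            have : f^[N - j] (f^[j] x) = x := by
              rw [← Function.iterate_add_apply, Nat.sub_add_cancel hj.le]
              exact hpt
            exact this
          have hdvd : N ∣ N - j + i := by
            have h0 := Function.IsPeriodicPt.minimalPeriod_dvd
              (show IsPeriodicPt f (N - j + i) x from this)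
            rwa [hper x hx] at h0
          have := Nat.le_of_dvd (by omega) hdvd
          omega
        · by_contra hne
          have : f^[N - i + j] x = x := by
            rw [Function.iterate_add_apply, ← hij]
            rw [← Function.iterate_add_apply, Nat.sub_add_cancel hi.le]
            exact hpt
          have hdvd : N ∣ N - i + j := by
            have h0 := Function.IsPeriodicPt.minimalPeriod_dvd
              (show IsPeriodicPt f (N - i + j) x from this)
            rwa [hper x hx] at h0
          have := Nat.le_of_dvd (by omega) hdvd
          omega
      have hcardO : O.card = N := by
        rw [hO, Finset.card_image_of_injOn hinj, Finset.card_range]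
      have hxO : x ∈ O := by
        simp only [hO, Finset.mem_image]
        exact ⟨0, Finset.mem_range.mpr hN, rfl⟩
      have hss : B \ O ⊂ B := Finset.sdiff_ssubset hOB ⟨x, hxO⟩
      have hclO : ∀ y ∈ B \ O, f y ∈ B \ O := by
        intro y hy
        rw [Finset.mem_sdiff] at hy
        obtain ⟨hyB, hyO⟩ := hy
        rw [Finset.mem_sdiff]
        refine ⟨hcl y hyB, fun hfy => ?_⟩
        apply hyO
        simp only [hO, Finset.mem_image] at hfy ⊢
        obtain ⟨k, hk, hfk⟩ := hfy
        refine ⟨(N - 1 + k) % N, Finset.mem_range.mpr (Nat.mod_lt _ hN), ?_⟩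
        have hyper : IsPeriodicPt f N y := by
          rw [← hper y hyB]; exact isPeriodicPt_minimalPeriod f y
        have : y = f^[N - 1] (f y) := by
          have h1 : f^[N - 1] (f y) = f^[N] y := by
            rw [← Function.iterate_succ_apply]
            congr 1
            omega
          rw [h1, hyper]
        rw [← hmod, this, ← hfk, ← Function.iterate_add_apply]
      have hdvd' : N ∣ (B \ O).card := ih (B \ O) hss
        (fun y hy => hper y (Finset.mem_sdiff.mp hy).1) hclO
      have hcardsd : (B \ O).card = B.card - N := by
        rw [Finset.card_sdiff_of_subset hOB, hcardO]
      have hle : N ≤ B.card := hcardO ▸ Finset.card_le_card hOB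
      obtain ⟨t, ht⟩ := hdvd'
      refine ⟨t + 1, ?_⟩
      have hexp : N * (t + 1) = N * t + N := by ring
      omega
lemma aux_iff (m : ℕ) (hm : 0 < m) : ordCompl[2] m = 1 ↔ ∃ i : ℕ, m = 2 ^ i := by
  constructor
  · intro h
    refine ⟨m.factorization 2, ?_⟩
    have h2 := Nat.ordProj_mul_ordCompl_eq_self m 2
    rw [h, mul_one] at h2
    exact h2.symm
  · rintro ⟨i, rfl⟩
    have hfac : ((2:ℕ) ^ i).factorization 2 = i := by
      rw [Nat.Prime.factorization_pow Nat.prime_two]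
      simp
    show 2 ^ i / 2 ^ (((2:ℕ)^i).factorization 2) = 1
    rw [hfac, Nat.div_self (pow_pos two_pos i)]


end auxStatement3


/-- For an odd map `g` on a symmetric set `S ⊆ ℝ` containing `0`, if `ψ(m)` is the number
of solutions of `g^m(x) = -x` in `S`, then `Φ₂(m, ψ) ≡ 0 (mod 2m)`. -/
theorem statement3 (S : Set ℝ) (h0 : (0 : ℝ) ∈ S)
    (hS : ∀ x : ℝ, x ∈ S ↔ -x ∈ S)
    (g : ℝ → ℝ) (hmaps : ∀ x ∈ S, g x ∈ S)
    (hodd : ∀ x ∈ S, g (-x) = - g x)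
    (hfin : ∀ m : ℕ, 0 < m → {x : ℝ | x ∈ S ∧ g^[m] x = -x}.Finite)
    (ψ : ℕ → ℤ)
    (hψ : ∀ m : ℕ, 0 < m → ψ m = ({x : ℝ | x ∈ S ∧ g^[m] x = -x}.ncard : ℤ))
    (m : ℕ) (hm : 0 < m) :
    (2 * m : ℤ) ∣ Phi2 m ψ := by
  classical
  have hg0 : g 0 = 0 := by
    have h := hodd 0 h0
    rw [neg_zero] at h
    linarith
  have hfin0 : ∀ k : ℕ, {x : ℝ | x ∈ S ∧ g^[k] x = -x}.Finite := by
    intro k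
    rcases Nat.eq_zero_or_pos k with rfl | hk
    · refine Set.Finite.subset (Set.finite_singleton 0) ?_
      rintro x ⟨-, hx⟩
      simp only [Function.iterate_zero_apply] at hx
      simp [show x = 0 by linarith]
    · exact hfin k hk
  set A : ℕ → Finset ℝ := fun k => (hfin0 k).toFinset with hA
  have hmemA : ∀ (k : ℕ) (x : ℝ), x ∈ A k ↔ x ∈ S ∧ g^[k] x = -x := by
    intro k x
    show x ∈ (hfin0 k).toFinset ↔ _
    rw [Set.Finite.mem_toFinset]
    rfl
  have hzeroA : ∀ k, (0:ℝ) ∈ A k :=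
    fun k => (hmemA k 0).mpr ⟨h0, by rw [Function.iterate_fixed hg0, neg_zero]⟩
  have hpsiA : ∀ k, 0 < k → ψ k = ((A k).card : ℤ) := by
    intro k hk
    rw [hψ k hk, Set.ncard_eq_toFinset_card _ (hfin0 k)]
  set A' : ℕ → Finset ℝ := fun k => (A k).erase 0 with hA'
  have hmemA' : ∀ (k : ℕ) (x : ℝ), x ∈ A' k ↔ x ≠ 0 ∧ x ∈ S ∧ g^[k] x = -x := by
    intro k x
    show x ∈ (A k).erase 0 ↔ _
    rw [Finset.mem_erase, hmemA k x]
  have hcardA' : ∀ k, 0 < k → ((A' k).card : ℤ) = ψ k - 1 := by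
    intro k hk
    have h1 : 1 ≤ (A k).card := Finset.card_pos.mpr ⟨0, hzeroA k⟩
    rw [hpsiA k hk]
    show (((A k).erase 0).card : ℤ) = _
    rw [Finset.card_erase_of_mem (hzeroA k), Nat.cast_sub h1, Nat.cast_one]
  set F := m.divisors.filter (fun d => Odd d ∧ Squarefree d) with hF
  -- facts about F
  have hmemF : ∀ d ∈ F, d ∣ m ∧ Odd d ∧ Squarefree d := by
    intro d hd
    rw [hF, Finset.mem_filter, Nat.mem_divisors] at hd
    exact ⟨hd.1.1, hd.2⟩
  have hQodd : Odd (ordCompl[2] m) := by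
    have h2 := Nat.not_dvd_ordCompl Nat.prime_two hm.ne'
    rw [Nat.odd_iff]
    omega
  have hQ : ∀ d ∈ F, d ∣ ordCompl[2] m := by
    intro d hd
    obtain ⟨hdm, hdodd, -⟩ := hmemF d hd
    have hco : d.Coprime (2 ^ m.factorization 2) :=
      Nat.Coprime.pow_right _ hdodd.coprime_two_right
    refine hco.dvd_of_dvd_mul_left ?_
    rwa [Nat.ordProj_mul_ordCompl_eq_self]
  have hsumF : ∑ d ∈ F, (moebius d : ℤ) = if ∃ i : ℕ, m = 2 ^ i then 1 else 0 := by
    have hFeq : F = (ordCompl[2] m).divisors.filter Squarefree := by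
      rw [← aux_filter_eq m (ordCompl[2] m) hm.ne' (Nat.ordCompl_dvd m 2) hQodd, ← hF,
        Finset.filter_true_of_mem hQ]
    rw [hFeq, aux_sum_moebius]
    by_cases hpow : ∃ i : ℕ, m = 2 ^ i
    · rw [if_pos hpow, if_pos ((aux_iff m hm).mpr hpow)]
    · rw [if_neg hpow, if_neg (fun h => hpow ((aux_iff m hm).mp h))]
  have hstep1 : Phi2 m ψ = ∑ d ∈ F, (moebius d : ℤ) * (ψ (m / d) - 1) := by
    rw [Phi2]
    by_cases hpow : ∃ i : ℕ, m = 2 ^ i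
    · rw [if_pos hpow]
      have hF1 : F = {1} := by
        obtain ⟨i, hi⟩ := hpow
        rw [hF]
        ext d
        simp only [Finset.mem_filter, Nat.mem_divisors, Finset.mem_singleton]
        constructor
        · rintro ⟨⟨hdm, -⟩, hdodd, -⟩
          rw [hi] at hdm
          obtain ⟨j, hj, rfl⟩ := (Nat.dvd_prime_pow Nat.prime_two).mp hdm
          rcases Nat.eq_zero_or_pos j with rfl | hjp
          · simp
          · exfalso
            have h2 : (2:ℕ) ∣ 2 ^ j := dvd_pow_self 2 hjp.ne'
            rw [Nat.odd_iff] at hdodd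
            omega
        · rintro rfl
          exact ⟨⟨one_dvd m, hm.ne'⟩, odd_one, squarefree_one⟩
      rw [hF1, Finset.sum_singleton, Nat.div_one, moebius_apply_one]
      push_cast
      ring
    · rw [if_neg hpow, ← hF]
      have hsub : ∑ d ∈ F, (moebius d:ℤ) * (ψ (m/d) - 1)
          = ∑ d ∈ F, (moebius d:ℤ) * ψ (m/d) - ∑ d ∈ F, (moebius d:ℤ) := by
        rw [← Finset.sum_sub_distrib]
        exact Finset.sum_congr rfl (fun d _ => by ring)
      rw [hsub, hsumF, if_neg hpow, sub_zero]
  -- step 3 : subset property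
  have hAsub : ∀ d ∈ F, A' (m / d) = (A' m).filter (fun x => g^[m / d] x = -x) := by
    intro d hd
    obtain ⟨hdm, hdodd, -⟩ := hmemF d hd
    have hd0 : 0 < d := Nat.pos_of_dvd_of_pos hdm hm
    ext x
    rw [Finset.mem_filter, hmemA', hmemA']
    constructor
    · rintro ⟨hx0, hxS, hgx⟩
      refine ⟨⟨hx0, hxS, ?_⟩, hgx⟩
      have hkey := aux_key hmaps hS hodd hxS hx0 hgx
      obtain ⟨h1, h2⟩ := (hkey (m / d)).mp hgx
      apply (hkey m).mpr
      have hn0 : 0 < Function.minimalPeriod g x := by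
        rcases Nat.eq_zero_or_pos (Function.minimalPeriod g x) with h | h
        · exfalso
          rw [h] at h1 h2
          have := Nat.eq_zero_of_zero_dvd h1
          exact h2 (by omega)
        · exact h
      constructor
      · exact h1.trans (mul_dvd_mul_left 2 (Nat.div_dvd_of_dvd hdm))
      · rintro ⟨e, he⟩
        obtain ⟨c, hc⟩ := h1
        have hcodd : Odd c := by
          rcases Nat.even_or_odd c with ⟨c2, hce⟩ | ho
          · exfalso
            refine h2 ⟨c2, ?_⟩
            have h' : 2 * (m/d) = 2 * (Function.minimalPeriod g x * c2) := by
              rw [hc, hce]; ring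
            omega
          · exact ho
        have hmd : m / d * d = m := Nat.div_mul_cancel hdm
        have heq : Function.minimalPeriod g x * (c * d)
            = Function.minimalPeriod g x * (2 * e) := by
          calc Function.minimalPeriod g x * (c*d)
              = (Function.minimalPeriod g x * c) * d := by ring
            _ = 2*(m/d)*d := by rw [hc]
            _ = 2 * m := by rw [mul_assoc, hmd]
            _ = Function.minimalPeriod g x * (2*e) := by rw [he]; ring
        have hcd : c * d = 2 * e := Nat.eq_of_mul_eq_mul_left hn0 heq
        have hocd : Odd (c * d) := hcodd.mul hdodd
        rw [Nat.odd_iff, hcd] at hocd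
        omega
    · rintro ⟨⟨hx0, hxS, hgm⟩, hgx⟩
      exact ⟨hx0, hxS, hgx⟩
  -- step 4 : swap sums
  have hstep4 : Phi2 m ψ
      = ∑ x ∈ A' m, ∑ d ∈ F, (if g^[m/d] x = -x then (moebius d : ℤ) else 0) := by
    have hterm : ∀ d ∈ F, (moebius d : ℤ) * (ψ (m / d) - 1)
        = ∑ x ∈ A' m, (if g^[m/d] x = -x then (moebius d : ℤ) else 0) := by
      intro d hd
      obtain ⟨hdm, -, -⟩ := hmemF d hd
      have hd0 : 0 < d := Nat.pos_of_dvd_of_pos hdm hm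
      have hmd0 : 0 < m / d := Nat.div_pos (Nat.le_of_dvd hm hdm) hd0
      rw [← hcardA' (m/d) hmd0, hAsub d hd, ← Finset.sum_filter, Finset.sum_const,
        nsmul_eq_mul]
      ring
    rw [hstep1, Finset.sum_congr rfl hterm, Finset.sum_comm]
  -- step 5 : inner sum
  have hstep5 : ∀ x ∈ A' m, ∑ d ∈ F, (if g^[m/d] x = -x then (moebius d:ℤ) else 0)
      = if Function.minimalPeriod g x = 2*m then 1 else 0 := by
    intro x hx
    rw [hmemA'] at hx
    obtain ⟨hx0, hxS, hgm⟩ := hx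
    have hkey := aux_key hmaps hS hodd hxS hx0 hgm
    obtain ⟨h1, h2⟩ := (hkey m).mp hgm
    rw [← aux_core m (Function.minimalPeriod g x) hm h1 h2, ← hF]
    exact Finset.sum_congr rfl (fun d _ => if_congr (hkey (m/d)) rfl rfl)
  set B := (A' m).filter (fun x => Function.minimalPeriod g x = 2*m) with hB
  have hstep6 : Phi2 m ψ = (B.card : ℤ) := by
    rw [hstep4, Finset.sum_congr rfl hstep5, hB, Finset.sum_boole]
  -- step 7 : orbit counting
  have hper : ∀ x ∈ B, Function.minimalPeriod g x = 2*m := by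
    intro x hx
    rw [hB, Finset.mem_filter] at hx
    exact hx.2
  have hcl : ∀ x ∈ B, g x ∈ B := by
    intro x hx
    rw [hB, Finset.mem_filter, hmemA'] at hx
    obtain ⟨⟨hx0, hxS, hgm⟩, hmin⟩ := hx
    have hpt : Function.IsPeriodicPt g (2*m) x := by
      rw [← hmin]; exact Function.isPeriodicPt_minimalPeriod g x
    have hiterx : g^[2*m] x = x := hpt
    have hx2m : g^[2*m - 1] (g x) = x := by
      have h21 : 2*m = 2*m-1+1 := by omega
      rw [h21, Function.iterate_succ_apply] at hiterx
      exact hiterx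
    rw [hB, Finset.mem_filter, hmemA']
    refine ⟨⟨?_, hmaps x hxS, ?_⟩, ?_⟩
    · intro hgx0
      apply hx0
      rw [← hx2m, hgx0, Function.iterate_fixed hg0]
    · rw [← Function.iterate_succ_apply, Function.iterate_succ_apply', hgm, hodd x hxS]
    · have hptg : Function.IsPeriodicPt g (2*m) (g x) := hpt.apply
      have hdvd1 : Function.minimalPeriod g (g x) ∣ 2*m := hptg.minimalPeriod_dvd
      have hptx : Function.IsPeriodicPt g (Function.minimalPeriod g (g x)) x := by
        show g^[Function.minimalPeriod g (g x)] x = x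
        set n' := Function.minimalPeriod g (g x)
        have hgn' : g^[n'] (g x) = g x := Function.isPeriodicPt_minimalPeriod g (g x)
        calc g^[n'] x = g^[n'] (g^[2*m - 1] (g x)) := by rw [hx2m]
          _ = g^[n' + (2*m - 1)] (g x) := by rw [Function.iterate_add_apply]
          _ = g^[(2*m - 1) + n'] (g x) := by rw [Nat.add_comm]
          _ = g^[2*m - 1] (g^[n'] (g x)) := by rw [Function.iterate_add_apply]
          _ = g^[2*m - 1] (g x) := by rw [hgn']
          _ = x := hx2m
      have hdvd2 : 2*m ∣ Function.minimalPeriod g (g x) := by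
        have := hptx.minimalPeriod_dvd
        rwa [hmin] at this
      exact Nat.dvd_antisymm hdvd1 hdvd2
  have hdvdB : 2*m ∣ B.card := aux_orbit g (2*m) (by omega) B hper hcl
  rw [hstep6]
  exact_mod_cast Int.natCast_dvd_natCast.mpr hdvdB
end

section
/- Let f : [1,4] → [1,4] be the continuous map with f(1) = f(3) = 4, f(2) = 1, f(4) = 2, and f affine on each of the intervals [1,2], [2,3], [3,4]. Then for every positive integer k, the set {x ∈ [1,4] : f^k(x) = x} is finite and has exactly a_{3,k} elements. -/
/-- `f` is affine (linear interpolation between its endpoint values) on `[a, b]`. -/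
def AffOn (f : ℝ → ℝ) (a b : ℝ) : Prop :=
  ∀ x ∈ Set.Icc a b, f x = f a + (x - a) * (f b - f a) / (b - a)

open scoped NNReal

namespace S4

def Adj (i j : Fin 3) : Prop := ¬ (i = 2 ∧ j = 0)

instance (i j : Fin 3) : Decidable (Adj i j) := by unfold Adj; infer_instance

def N : Matrix (Fin 3) (Fin 3) ℕ := Matrix.of fun i j => if Adj i j then 1 else 0

def PathT (n : ℕ) (i j : Fin 3) :=
  {s : Fin (n+1) → Fin 3 //
    s 0 = i ∧ s (Fin.last n) = j ∧ ∀ t : Fin n, Adj (s t.castSucc) (s t.succ)}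

instance (n : ℕ) (i j : Fin 3) : Fintype (PathT n i j) := by unfold PathT; infer_instance

lemma card_path_zero (i j : Fin 3) : Nat.card (PathT 0 i j) = if i = j then 1 else 0 := by
  unfold PathT
  rw [Nat.card_eq_fintype_card]
  fin_cases i <;> fin_cases j <;> simp <;> decide

def fiberEquiv (n : ℕ) (i j l : Fin 3) (hl : Adj l j) :
    {s : PathT (n+1) i j // s.1 (Fin.last n).castSucc = l} ≃ PathT n i l where
  toFun s := ⟨Fin.init s.1.1, by
    obtain ⟨⟨s, h0, hlast, hadj⟩, hfib⟩ := s
    refine ⟨?_, ?_, ?_⟩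
    · simpa [Fin.init] using h0
    · simpa [Fin.init] using hfib
    · intro t
      have := hadj t.castSucc
      simpa only [Fin.init, Fin.succ_castSucc] using this⟩
  invFun p := ⟨⟨Fin.snoc p.1 j, by
    refine ⟨?_, ?_, ?_⟩
    · rw [show (0 : Fin (n+2)) = (0 : Fin (n+1)).castSucc from rfl, Fin.snoc_castSucc]
      exact p.2.1
    · simp
    · intro t
      induction t using Fin.lastCases with
      | last =>
        rw [Fin.succ_last, Fin.snoc_last, Fin.snoc_castSucc]
        rw [p.2.2.1]; exact hl
      | cast t =>
        have e2 : (t.castSucc : Fin (n+1)).succ = t.succ.castSucc := (Fin.succ_castSucc t).symm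
        rw [e2, Fin.snoc_castSucc, Fin.snoc_castSucc]
        exact p.2.2.2 t⟩, by
    simp only [Fin.snoc_castSucc]; exact p.2.2.1⟩
  left_inv s := by
    apply Subtype.ext; apply Subtype.ext
    have : s.1.1 (Fin.last (n+1)) = j := s.1.2.2.1
    simpa [this] using Fin.snoc_init_self s.1.1
  right_inv p := by
    apply Subtype.ext
    simp [Fin.init_snoc]

end S4

namespace S4

lemma card_fiber (n : ℕ) (i j l : Fin 3) :
    Nat.card {s : PathT (n+1) i j // s.1 (Fin.last n).castSucc = l}
      = Nat.card (PathT n i l) * N l j := by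
  by_cases hl : Adj l j
  · rw [Nat.card_congr (fiberEquiv n i j l hl)]
    simp [N, hl]
  · have : IsEmpty {s : PathT (n+1) i j // s.1 (Fin.last n).castSucc = l} := by
      constructor
      rintro ⟨⟨s, h0, hlast, hadj⟩, hfib⟩
      have hfib' : s (Fin.last n).castSucc = l := hfib
      have := hadj (Fin.last n)
      rw [hfib', Fin.succ_last, hlast] at this
      exact hl this
    rw [Nat.card_of_isEmpty]
    simp [N, hl]

lemma card_path (n : ℕ) (i : Fin 3) : ∀ j, Nat.card (PathT n i j) = (N ^ n) i j := by
  induction n with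
  | zero => intro j; rw [card_path_zero]; simp [Matrix.one_apply]
  | succ n ih =>
    intro j
    have hdec : Nat.card (PathT (n+1) i j)
        = ∑ l : Fin 3, Nat.card {s : PathT (n+1) i j // s.1 (Fin.last n).castSucc = l} := by
      classical
      rw [Nat.card_eq_fintype_card,
        Fintype.card_congr (Equiv.sigmaFiberEquiv (fun s : PathT (n+1) i j =>
          s.1 (Fin.last n).castSucc)).symm, Fintype.card_sigma]
      refine Finset.sum_congr rfl fun l _ => ?_
      rw [Nat.card_eq_fintype_card]
    rw [hdec]
    rw [pow_succ, Matrix.mul_apply]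
    refine Finset.sum_congr rfl fun l _ => ?_
    rw [card_fiber, ih l]

end S4

namespace S4

def CycT (m : ℕ) := {s : Fin (m+1) → Fin 3 // ∀ j, Adj (s j) (s (j+1))}

instance (m : ℕ) : Fintype (CycT m) := by unfold CycT; infer_instance

def cycIdx (m : ℕ) (n : ℕ) : Fin (m+1) := ⟨n % (m+1), Nat.mod_lt _ (Nat.succ_pos m)⟩

lemma cycIdx_lt (m n : ℕ) (h : n < m + 1) : cycIdx m n = ⟨n, h⟩ := by
  apply Fin.ext; simp [cycIdx, Nat.mod_eq_of_lt h]

lemma cycIdx_succ (m n : ℕ) : cycIdx m (n + 1) = cycIdx m n + 1 := by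
  apply Fin.ext
  show (n + 1) % (m + 1) = ((cycIdx m n).val + (1 : Fin (m+1)).val) % (m + 1)
  rw [Fin.val_one']
  show _ = (n % (m+1) + 1 % (m + 1)) % (m + 1)
  rw [Nat.add_mod_mod, Nat.mod_add_mod]

lemma val_add_one (m : ℕ) (j : Fin (m+1)) : ((j + 1 : Fin (m+1)) : ℕ) = (j.val + 1) % (m+1) := by
  show ((j.val + (1 : Fin (m+1)).val) % (m + 1)) = _
  rw [Fin.val_one', Nat.add_mod_mod]

def cycFiberEquiv (m : ℕ) (i : Fin 3) :
    {s : CycT m // s.1 0 = i} ≃ PathT (m+1) i i where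
  toFun s := ⟨fun t => s.1.1 (cycIdx m t.val), by
    refine ⟨?_, ?_, ?_⟩
    · show s.1.1 (cycIdx m (0 : Fin (m+2)).val) = i
      have e : cycIdx m (0 : Fin (m+2)).val = 0 := by apply Fin.ext; simp [cycIdx]
      rw [e]; exact s.2
    · show s.1.1 (cycIdx m (Fin.last (m+1)).val) = i
      have e : cycIdx m (Fin.last (m+1)).val = 0 := by apply Fin.ext; simp [cycIdx]
      rw [e]; exact s.2
    · intro t
      show Adj (s.1.1 (cycIdx m t.castSucc.val)) (s.1.1 (cycIdx m t.succ.val))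
      have h1 : cycIdx m t.castSucc.val = t := by
        rw [Fin.coe_castSucc, cycIdx_lt m t.val t.isLt]
      have h2 : cycIdx m t.succ.val = t + 1 := by
        rw [Fin.val_succ, cycIdx_succ, cycIdx_lt m t.val t.isLt]
      rw [h1, h2]
      exact s.1.2 t⟩
  invFun p := ⟨⟨fun j => p.1 j.castSucc, by
    intro j
    show Adj (p.1 j.castSucc) (p.1 (j + 1).castSucc)
    have key : p.1 (j + 1).castSucc = p.1 j.succ := by
      by_cases hj : (j : ℕ) + 1 < m + 1
      · have e : (j + 1 : Fin (m+1)).castSucc = j.succ := by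
          apply Fin.ext
          rw [Fin.coe_castSucc, val_add_one, Nat.mod_eq_of_lt hj, Fin.val_succ]
        rw [e]
      · have hjm : (j : ℕ) + 1 = m + 1 := by omega
        have e1 : ((j + 1 : Fin (m+1)) : ℕ) = 0 := by
          rw [val_add_one, hjm, Nat.mod_self]
        have e2 : (j + 1 : Fin (m+1)).castSucc = (0 : Fin (m+1)).castSucc := by
          apply Fin.ext; rw [Fin.coe_castSucc, e1]; rfl
        have e3 : j.succ = Fin.last (m+1) := by
          apply Fin.ext; rw [Fin.val_succ, hjm]; rfl
        rw [e2, e3, p.2.2.1]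
        have e4 : (0 : Fin (m+1)).castSucc = 0 := rfl
        rw [e4, p.2.1]
    rw [key]
    exact p.2.2.2 j⟩, by
    show p.1 (0 : Fin (m+1)).castSucc = i
    have e4 : (0 : Fin (m+1)).castSucc = 0 := rfl
    rw [e4, p.2.1]⟩
  left_inv s := by
    apply Subtype.ext; apply Subtype.ext
    funext j
    show s.1.1 (cycIdx m j.castSucc.val) = s.1.1 j
    rw [Fin.coe_castSucc, cycIdx_lt m j.val j.isLt]
  right_inv p := by
    apply Subtype.ext
    funext t
    show p.1 (cycIdx m t.val).castSucc = p.1 t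
    by_cases ht : (t : ℕ) < m + 1
    · have e : (cycIdx m t.val).castSucc = t := by
        apply Fin.ext
        rw [Fin.coe_castSucc, cycIdx_lt m t.val ht]
      rw [e]
    · have htm : (t : ℕ) = m + 1 := by omega
      have e1 : cycIdx m t.val = 0 := by
        apply Fin.ext; simp [cycIdx, htm]
      have e2 : t = Fin.last (m+1) := by apply Fin.ext; rw [htm]; rfl
      rw [e1, e2, p.2.2.1]
      have e4 : (0 : Fin (m+1)).castSucc = 0 := rfl
      rw [e4, p.2.1]

lemma card_cyc (m : ℕ) : Nat.card (CycT m) = Matrix.trace (N ^ (m+1)) := by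
  classical
  rw [Nat.card_eq_fintype_card,
    Fintype.card_congr (Equiv.sigmaFiberEquiv (fun s : CycT m => s.1 0)).symm,
    Fintype.card_sigma, Matrix.trace]
  refine Finset.sum_congr rfl fun i _ => ?_
  rw [← Nat.card_eq_fintype_card, Nat.card_congr (cycFiberEquiv m i), card_path]
  rfl

end S4

namespace S4

lemma N_cube : N^3 + N = 3 • N^2 := by decide

lemma trace_one' : Matrix.trace (N^1) = 3 := by decide
lemma trace_two' : Matrix.trace (N^2) = 7 := by decide

lemma trace_rec (k : ℕ) :
    Matrix.trace (N^(k+3)) + Matrix.trace (N^(k+1)) = 3 * Matrix.trace (N^(k+2)) := by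
  have h : N^(k+3) + N^(k+1) = 3 • N^(k+2) := by
    calc N^(k+3) + N^(k+1) = N^k * N^3 + N^k * N := by
          rw [← pow_add, ← pow_succ]
      _ = N^k * (N^3 + N) := by rw [mul_add]
      _ = N^k * (3 • N^2) := by rw [N_cube]
      _ = 3 • (N^k * N^2) := by rw [Matrix.mul_smul]
      _ = 3 • N^(k+2) := by rw [← pow_add]
  calc Matrix.trace (N^(k+3)) + Matrix.trace (N^(k+1))
      = Matrix.trace (N^(k+3) + N^(k+1)) := (Matrix.trace_add _ _).symm
    _ = Matrix.trace (3 • N^(k+2)) := by rw [h]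
    _ = 3 * Matrix.trace (N^(k+2)) := by rw [Matrix.trace_smul]; rfl

def trN (n : ℕ) : ℕ := Matrix.trace (N^n)

lemma card_cyc_int (a : ℕ → ℤ)
    (haLow : ∀ k : ℕ, 1 ≤ k → k ≤ 3 - 1 → a k = 2 ^ (k + 1) - 1)
    (haRec : ∀ k : ℕ, 3 ≤ k →
      a k = 3 * a (k - 1) - ∑ i ∈ Finset.Icc 2 (3 - 1), a (k - i)) :
    ∀ m : ℕ, (Nat.card (CycT m) : ℤ) = a (m + 1) := by
  have key : ∀ m : ℕ, a (m + 1) = (trN (m+1) : ℤ) := by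
    intro m
    induction m using Nat.strong_induction_on with
    | _ m ih =>
      match m with
      | 0 =>
        rw [haLow 1 le_rfl (by norm_num)]
        have : trN 1 = 3 := trace_one'
        rw [this]; norm_num
      | 1 =>
        rw [haLow 2 (by norm_num) (by norm_num)]
        have : trN 2 = 7 := trace_two'
        rw [this]; norm_num
      | (n+2) =>
        rw [haRec (n+3) (by omega)]
        have e1 : n + 3 - 1 = n + 2 := by omega
        have e2 : (3:ℕ) - 1 = 2 := by omega
        rw [e1, e2, Finset.Icc_self, Finset.sum_singleton]
        have e3 : n + 3 - 2 = n + 1 := by omega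
        rw [e3, ih (n+1) (by omega), ih n (by omega)]
        have h : trN (n+3) + trN (n+1) = 3 * trN (n+2) := trace_rec n
        have h' : (trN (n+3) : ℤ) + (trN (n+1) : ℤ) = 3 * (trN (n+2) : ℤ) := by
          exact_mod_cast h
        linarith
  intro m
  rw [key]
  have : Nat.card (CycT m) = trN (m+1) := card_cyc m
  rw [this]

end S4

namespace S4

def Iv : Fin 3 → Set ℝ := ![Set.Icc 1 2, Set.Icc 2 3, Set.Icc 3 4]
def Fb : Fin 3 → ℝ → ℝ := ![fun x => 7 - 3*x, fun x => 3*x - 5, fun x => 10 - 2*x]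
noncomputable def gb : Fin 3 → ℝ → ℝ :=
  ![fun y => (7-y)/3, fun y => (y+5)/3, fun y => (10-y)/2]
noncomputable def sym (x : ℝ) : Fin 3 := if x < 2 then 0 else if x ≤ 3 then 1 else 2

lemma Iv_subset (i : Fin 3) : Iv i ⊆ Set.Icc (1:ℝ) 4 := by
  fin_cases i <;> simp [Iv] <;> intro x hx <;>
    exact ⟨by linarith [hx.1], by linarith [hx.2]⟩

lemma Iv_closed (i : Fin 3) : IsClosed (Iv i) := by
  fin_cases i <;> simp [Iv] <;> exact isClosed_Icc

lemma Iv_nonempty (i : Fin 3) : (Iv i).Nonempty := by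
  fin_cases i <;> simp [Iv] <;> norm_num

lemma Fb_gb (i : Fin 3) (y : ℝ) : Fb i (gb i y) = y := by
  fin_cases i <;> simp [Fb, gb] <;> ring

lemma gb_Fb (i : Fin 3) (x : ℝ) : gb i (Fb i x) = x := by
  fin_cases i <;> simp [Fb, gb] <;> ring

lemma mem_Iv_sym {x : ℝ} (hx : x ∈ Set.Icc (1:ℝ) 4) : x ∈ Iv (sym x) := by
  obtain ⟨h1, h4⟩ := hx
  unfold sym
  split_ifs with h2 h3
  · simp [Iv]; constructor <;> linarith
  · simp [Iv]; constructor <;> linarith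
  · simp [Iv]; constructor <;> linarith

lemma sym_cases {x : ℝ} {i : Fin 3} (hx : x ∈ Iv i) :
    sym x = i ∨ (x = 2 ∧ i = 0) ∨ (x = 3 ∧ i = 2) := by
  unfold sym
  fin_cases i
  · have hx' : (1:ℝ) ≤ x ∧ x ≤ 2 := by simpa [Iv] using hx
    obtain ⟨ha, hb⟩ := hx'
    rcases lt_or_eq_of_le hb with h | h
    · left; rw [if_pos h]; rfl
    · right; left; exact ⟨h, rfl⟩
  · have hx' : (2:ℝ) ≤ x ∧ x ≤ 3 := by simpa [Iv] using hx
    obtain ⟨ha, hb⟩ := hx'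
    left; rw [if_neg (by linarith), if_pos hb]; rfl
  · have hx' : (3:ℝ) ≤ x ∧ x ≤ 4 := by simpa [Iv] using hx
    obtain ⟨ha, hb⟩ := hx'
    rcases lt_or_eq_of_le ha with h | h
    · left; rw [if_neg (by linarith), if_neg (by linarith)]; rfl
    · right; right; exact ⟨h.symm, rfl⟩

lemma sym_two : sym 2 = 1 := by
  unfold sym; rw [if_neg (by norm_num), if_pos (by norm_num)]

lemma gb_maps {i j : Fin 3} (hij : Adj i j) {y : ℝ} (hy : y ∈ Iv j) : gb i y ∈ Iv i := by
  fin_cases i <;> fin_cases j <;>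
    first
      | exact absurd hij (by decide)
      | (simp [Iv, gb] at hy ⊢; obtain ⟨ha, hb⟩ := hy; constructor <;> linarith)

lemma gb_lip (i : Fin 3) : LipschitzWith 2⁻¹ (gb i) := by
  have hc : ((2⁻¹ : ℝ≥0) : ℝ) = 1/2 := by norm_num
  rw [lipschitzWith_iff_dist_le_mul]
  intro x y
  rw [hc, Real.dist_eq, Real.dist_eq]
  have h := abs_nonneg (x - y)
  fin_cases i <;> show |_ - _| ≤ _
  · have e : gb ⟨0, by norm_num⟩ x - gb ⟨0, by norm_num⟩ y = -((x-y)/3) := by simp [gb]; ring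
    rw [e, abs_neg, abs_div]
    rw [show |(3:ℝ)| = 3 by norm_num]
    linarith
  · have e : gb ⟨1, by norm_num⟩ x - gb ⟨1, by norm_num⟩ y = (x-y)/3 := by simp [gb]; ring
    rw [e, abs_div]
    rw [show |(3:ℝ)| = 3 by norm_num]
    linarith
  · have e : gb ⟨2, by norm_num⟩ x - gb ⟨2, by norm_num⟩ y = -((x-y)/2) := by simp [gb]; ring
    rw [e, abs_neg, abs_div]
    rw [show |(2:ℝ)| = 2 by norm_num]
    linarith

end S4

namespace S4

section FLemmas

variable {f : ℝ → ℝ}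
  (hf1 : f 1 = 4) (hf3 : f 3 = 4) (hf2 : f 2 = 1) (hf4 : f 4 = 2)
  (haff1 : AffOn f 1 2) (haff2 : AffOn f 2 3) (haff3 : AffOn f 3 4)

include hf1 hf2 hf3 hf4 haff1 haff2 haff3

lemma f_eq {i : Fin 3} {x : ℝ} (hx : x ∈ Iv i) : f x = Fb i x := by
  fin_cases i
  · have hx' : x ∈ Set.Icc (1:ℝ) 2 := by simpa [Iv] using hx
    have := haff1 x hx'
    rw [hf1, hf2] at this
    rw [this]; show _ = Fb 0 x; simp [Fb]; ring
  · have hx' : x ∈ Set.Icc (2:ℝ) 3 := by simpa [Iv] using hx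
    have := haff2 x hx'
    rw [hf2, hf3] at this
    rw [this]; show _ = Fb 1 x; simp [Fb]; ring
  · have hx' : x ∈ Set.Icc (3:ℝ) 4 := by simpa [Iv] using hx
    have := haff3 x hx'
    rw [hf3, hf4] at this
    rw [this]; show _ = Fb 2 x; simp [Fb]; ring

lemma adj_sym {x : ℝ} (hx : x ∈ Set.Icc (1:ℝ) 4) : Adj (sym x) (sym (f x)) := by
  rintro ⟨h2, h0⟩
  have hx3 : 3 < x := by
    by_contra hle
    unfold sym at h2
    split_ifs at h2 with ha hb
    · exact absurd h2 (by decide)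
    · exact absurd h2 (by decide)
    · exact hle (by linarith)
  have hxI : x ∈ Iv 2 := by simp [Iv]; exact ⟨le_of_lt hx3, hx.2⟩
  have hfx : f x = 10 - 2*x := by
    rw [f_eq hf1 hf3 hf2 hf4 haff1 haff2 haff3 hxI]; simp [Fb]
  have hge : 2 ≤ f x := by rw [hfx]; linarith [hx.2]
  unfold sym at h0
  split_ifs at h0 with ha hb
  · linarith
  · exact absurd h0 (by decide)
  · exact absurd h0 (by decide)

end FLemmas

noncomputable def comp (σ : ℕ → Fin 3) : ℕ → ℕ → ℝ → ℝ
  | _, 0 => id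
  | j, (n+1) => gb (σ j) ∘ comp σ (j+1) n

lemma comp_lip (σ : ℕ → Fin 3) (j n : ℕ) : LipschitzWith (2⁻¹ ^ n) (comp σ j n) := by
  induction n generalizing j with
  | zero => exact LipschitzWith.id.weaken (by simp)
  | succ n ih =>
    have := (gb_lip (σ j)).comp (ih (j+1))
    rw [pow_succ]
    rw [mul_comm]
    exact this

lemma comp_maps {σ : ℕ → Fin 3} (hσ : ∀ l, Adj (σ l) (σ (l+1))) :
    ∀ n j (y : ℝ), y ∈ Iv (σ (j + n)) → comp σ j n y ∈ Iv (σ j) := by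
  intro n
  induction n with
  | zero => intro j y hy; exact hy
  | succ n ih =>
    intro j y hy
    show gb (σ j) (comp σ (j+1) n y) ∈ Iv (σ j)
    have : y ∈ Iv (σ ((j+1) + n)) := by
      have e : (j+1) + n = j + (n+1) := by omega
      rw [e]; exact hy
    exact gb_maps (hσ j) (ih (j+1) y this)

lemma contracting (m : ℕ) (σ : ℕ → Fin 3) :
    ContractingWith (2⁻¹ ^ (m+1) : ℝ≥0) (comp σ 0 (m+1)) :=
  ⟨pow_lt_one₀ zero_le
    (by rw [← NNReal.coe_lt_coe]; push_cast; norm_num) (Nat.succ_ne_zero m), comp_lip σ 0 (m+1)⟩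

noncomputable def Phi (m : ℕ) (s : Fin (m+1) → Fin 3) : ℝ :=
  ContractingWith.fixedPoint (comp (fun n => s (cycIdx m n)) 0 (m+1))
    (contracting m _)

end S4

namespace S4

lemma fixedPoint_mem_closed {K : ℝ≥0} {G : ℝ → ℝ} (hG : ContractingWith K G) {s : Set ℝ}
    (hs : IsClosed s) (hne : s.Nonempty) (hmap : Set.MapsTo G s s) :
    ContractingWith.fixedPoint G hG ∈ s := by
  obtain ⟨x0, hx0⟩ := hne
  exact hs.mem_of_tendsto (hG.tendsto_iterate_fixedPoint x0)
    (Filter.Eventually.of_forall fun n => hmap.iterate n hx0)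

lemma iterate_mod {α : Type*} (f : α → α) (m : ℕ) {x : α} (hper : f^[m+1] x = x) (n : ℕ) :
    f^[n] x = f^[n % (m+1)] x := by
  have aux : ∀ q r, f^[(m+1) * q + r] x = f^[r] x := by
    intro q
    induction q with
    | zero => intro r; simp
    | succ q ih =>
      intro r
      have e : (m+1) * (q+1) + r = ((m+1) * q + r) + (m+1) := by ring
      rw [e, Function.iterate_add_apply, hper, ih r]
  conv_lhs => rw [← Nat.div_add_mod n (m+1)]
  exact aux _ _

lemma cycIdx_period (m n : ℕ) : cycIdx m (n + (m+1)) = cycIdx m n := by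
  apply Fin.ext
  show (n + (m+1)) % (m+1) = n % (m+1)
  exact Nat.add_mod_right n (m+1)

lemma four_mem_Iv {i : Fin 3} (h : (4:ℝ) ∈ Iv i) : i = 2 := by
  fin_cases i <;> simp [Iv] at h ⊢ <;> norm_num at h

section FMain

variable {f : ℝ → ℝ}
  (hmaps : Set.MapsTo f (Set.Icc (1 : ℝ) 4) (Set.Icc (1 : ℝ) 4))
  (hf1 : f 1 = 4) (hf3 : f 3 = 4) (hf2 : f 2 = 1) (hf4 : f 4 = 2)
  (haff1 : AffOn f 1 2) (haff2 : AffOn f 2 3) (haff3 : AffOn f 3 4)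

include hf1 hf2 hf3 hf4 haff1 haff2 haff3

include hmaps in
lemma iter_mem {x : ℝ} (hx : x ∈ Set.Icc (1:ℝ) 4) (n : ℕ) : f^[n] x ∈ Set.Icc (1:ℝ) 4 :=
  hmaps.iterate n hx

lemma orbit124_four : ∀ n, f^[n] (4:ℝ) ∈ ({1,2,4} : Set ℝ) := by
  intro n
  induction n with
  | zero => simp
  | succ n ih =>
    rw [Function.iterate_succ_apply']
    rcases ih with h | h | h <;> rw [h] <;> simp [hf1, hf2, hf4]

lemma orbit124_two : ∀ n, f^[n] (2:ℝ) ∈ ({1,2,4} : Set ℝ) := by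
  intro n
  induction n with
  | zero => simp
  | succ n ih =>
    rw [Function.iterate_succ_apply']
    rcases ih with h | h | h <;> rw [h] <;> simp [hf1, hf2, hf4]

include hmaps in
lemma exists_dir (m : ℕ) (s : Fin (m+1) → Fin 3) (hs : ∀ j, Adj (s j) (s (j+1))) :
    Phi m s ∈ Set.Icc (1:ℝ) 4 ∧ f^[m+1] (Phi m s) = Phi m s ∧
      ∀ j : Fin (m+1), sym (f^[j.val] (Phi m s)) = s j := by
  have feq : ∀ {i : Fin 3} {x : ℝ}, x ∈ Iv i → f x = Fb i x :=
    fun hx => f_eq hf1 hf3 hf2 hf4 haff1 haff2 haff3 hx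
  set σ : ℕ → Fin 3 := fun n => s (cycIdx m n) with hσdef
  have hσ : ∀ l, Adj (σ l) (σ (l+1)) := by
    intro l
    show Adj (s (cycIdx m l)) (s (cycIdx m (l+1)))
    rw [cycIdx_succ]
    exact hs _
  have hσper : σ (m+1) = σ 0 := by
    show s (cycIdx m (m+1)) = s (cycIdx m 0)
    rw [show m+1 = 0 + (m+1) by omega, cycIdx_period]
  have hG := contracting m σ
  have hPhi : Phi m s = ContractingWith.fixedPoint (comp σ 0 (m+1)) hG := rfl
  set xs := Phi m s with hxsdef
  have hfix : comp σ 0 (m+1) xs = xs := by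
    rw [hPhi]; exact hG.fixedPoint_isFixedPt
  have hmemIv : xs ∈ Iv (σ 0) := by
    rw [hPhi]
    refine fixedPoint_mem_closed hG (Iv_closed _) (Iv_nonempty _) ?_
    intro y hy
    refine comp_maps hσ (m+1) 0 y ?_
    rw [show 0 + (m+1) = m+1 by omega, hσper]
    exact hy
  have hy_mem : ∀ j, j ≤ m+1 → comp σ j (m+1-j) xs ∈ Iv (σ j) := by
    intro j hj
    refine comp_maps hσ (m+1-j) j xs ?_
    rw [show j + (m+1-j) = m+1 by omega, hσper]
    exact hmemIv
  have hstep : ∀ j, j ≤ m → f (comp σ j (m+1-j) xs) = comp σ (j+1) (m+1-(j+1)) xs := by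
    intro j hj
    rw [feq (hy_mem j (by omega))]
    have e : m+1-j = (m+1-(j+1))+1 := by omega
    have e2 : comp σ j (m+1-j) xs = gb (σ j) (comp σ (j+1) (m+1-(j+1)) xs) := by
      rw [e]; rfl
    rw [e2, Fb_gb]
  have hiter : ∀ j, j ≤ m+1 → f^[j] xs = comp σ j (m+1-j) xs := by
    intro j hj
    induction j with
    | zero => exact hfix.symm
    | succ j ih =>
      rw [Function.iterate_succ_apply', ih (by omega), hstep j (by omega)]
  have hper : f^[m+1] xs = xs := by
    rw [hiter (m+1) le_rfl, Nat.sub_self]; rfl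
  have hmem14 : xs ∈ Set.Icc (1:ℝ) 4 := Iv_subset _ hmemIv
  refine ⟨hmem14, hper, ?_⟩
  intro j
  have hjm : j.val ≤ m := by omega
  have hyj : f^[j.val] xs ∈ Iv (σ j.val) := by
    rw [hiter j.val (by omega)]; exact hy_mem j.val (by omega)
  have hsj : σ j.val = s j := by
    show s (cycIdx m j.val) = s j
    congr 1
    rw [cycIdx_lt m j.val j.isLt]
  rcases sym_cases hyj with h | ⟨h2, h0⟩ | ⟨h3, h2'⟩
  · rw [h, hsj]
  · -- value 2 with symbol 0 : impossible
    exfalso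
    have hz2 : f (f^[j.val + m] xs) = 2 := by
      have h' : f^[(j.val+m)+1] xs = 2 := by
        rw [show j.val + m + 1 = j.val + (m+1) by omega,
          Function.iterate_add_apply, hper, h2]
      rw [← h']
      exact (Function.iterate_succ_apply' f _ xs).symm
    have hzper : f^[m+1] (f^[j.val+m] xs) = f^[j.val+m] xs := by
      rw [← Function.iterate_add_apply f (m+1) (j.val+m) xs,
        show (m+1) + (j.val+m) = (j.val+m) + (m+1) by omega,
        Function.iterate_add_apply, hper]
    have hz124 : f^[j.val+m] xs ∈ ({1,2,4} : Set ℝ) := by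
      rw [← hzper, Function.iterate_succ_apply, hz2]
      exact orbit124_two hf1 hf3 hf2 hf4 haff1 haff2 haff3 m
    have hz4 : f^[j.val+m] xs = 4 := by
      rcases hz124 with h | h | h
      · rw [h, hf1] at hz2; norm_num at hz2
      · rw [h, hf2] at hz2; norm_num at hz2
      · exact h
    have hzp : f^[j.val+m] xs = f^[(j.val+m) % (m+1)] xs := iterate_mod f m hper _
    set p := (j.val + m) % (m+1) with hpdef
    have hplt : p < m+1 := Nat.mod_lt _ (Nat.succ_pos m)
    have hz_mem : f^[p] xs ∈ Iv (σ p) := by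
      rw [hiter p (by omega)]; exact hy_mem p (by omega)
    have hσp : σ p = 2 := by
      apply four_mem_Iv
      rw [← show f^[p] xs = 4 from (hzp ▸ hz4)]
      exact hz_mem
    have hadj := hσ p
    have hp1 : σ (p+1) = σ j.val := by
      show s (cycIdx m (p+1)) = s (cycIdx m j.val)
      congr 1
      apply Fin.ext
      show (p+1) % (m+1) = j.val % (m+1)
      rw [hpdef, Nat.mod_add_mod,
        show j.val + m + 1 = j.val + (m+1) by omega, Nat.add_mod_right]
    rw [hσp, hp1, h0] at hadj
    exact hadj ⟨rfl, rfl⟩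
  · -- value 3 : impossible since 3 is not periodic
    exfalso
    have hper3 : f^[m+1] (f^[j.val] xs) = f^[j.val] xs := by
      rw [← Function.iterate_add_apply f (m+1) j.val xs,
        show (m+1) + j.val = j.val + (m+1) by omega,
        Function.iterate_add_apply, hper]
    rw [h3] at hper3
    have h124 : f^[m+1] (3:ℝ) ∈ ({1,2,4} : Set ℝ) := by
      rw [Function.iterate_succ_apply, hf3]
      exact orbit124_four hf1 hf3 hf2 hf4 haff1 haff2 haff3 m
    rw [hper3] at h124
    norm_num at h124

include hmaps in
lemma uniq_dir (m : ℕ) {x : ℝ} (hx : x ∈ Set.Icc (1:ℝ) 4) (hper : f^[m+1] x = x) :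
    x = Phi m (fun j : Fin (m+1) => sym (f^[j.val] x)) := by
  have feq : ∀ {i : Fin 3} {y : ℝ}, y ∈ Iv i → f y = Fb i y :=
    fun hy => f_eq hf1 hf3 hf2 hf4 haff1 haff2 haff3 hy
  set s : Fin (m+1) → Fin 3 := fun j => sym (f^[j.val] x) with hsdef
  set σ : ℕ → Fin 3 := fun n => s (cycIdx m n) with hσdef
  have hmem : ∀ n, f^[n] x ∈ Set.Icc (1:ℝ) 4 := fun n => hmaps.iterate n hx
  have hσ_eq : ∀ n, σ n = sym (f^[n] x) := by
    intro n
    show sym (f^[(cycIdx m n).val] x) = sym (f^[n] x)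
    rw [show (cycIdx m n).val = n % (m+1) from rfl, ← iterate_mod f m hper n]
  have claim : ∀ n, n ≤ m+1 → comp σ (m+1-n) n x = f^[m+1-n] x := by
    intro n
    induction n with
    | zero => intro _; rw [Nat.sub_zero]; exact hper.symm
    | succ n ih =>
      intro hn
      have hn' : n ≤ m+1 := by omega
      have e2 : m+1-(n+1)+1 = m+1-n := by omega
      show gb (σ (m+1-(n+1))) (comp σ (m+1-(n+1)+1) n x) = f^[m+1-(n+1)] x
      have ihx : comp σ (m+1-(n+1)+1) n x = f^[m+1-(n+1)+1] x := by
        rw [e2]; exact ih hn'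
      rw [ihx, Function.iterate_succ_apply' f (m+1-(n+1)) x]
      have hmemIv : f^[m+1-(n+1)] x ∈ Iv (σ (m+1-(n+1))) := by
        rw [hσ_eq]; exact mem_Iv_sym (hmem _)
      rw [feq hmemIv, gb_Fb]
  have hGfix : comp σ 0 (m+1) x = x := by
    have h := claim (m+1) le_rfl
    rw [Nat.sub_self] at h
    exact h
  exact (contracting m σ).fixedPoint_unique hGfix

include hmaps in
lemma itin_adj (m : ℕ) {x : ℝ} (hx : x ∈ Set.Icc (1:ℝ) 4) (hper : f^[m+1] x = x)
    (j : Fin (m+1)) :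
    Adj (sym (f^[j.val] x)) (sym (f^[((j+1 : Fin (m+1))).val] x)) := by
  have h1 : f^[((j+1 : Fin (m+1))).val] x = f (f^[j.val] x) := by
    rw [val_add_one, ← iterate_mod f m hper (j.val+1),
      Function.iterate_succ_apply']
  rw [h1]
  exact adj_sym hf1 hf3 hf2 hf4 haff1 haff2 haff3 (hmaps.iterate j.val hx)

end FMain

end S4

open S4

/-- For the continuous map `f : [1,4] → [1,4]` with `f(1) = f(3) = 4`, `f(2) = 1`,
`f(4) = 2`, affine on `[1,2]`, `[2,3]`, `[3,4]`, the set of fixed points of `f^k`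
is finite with exactly `a_{3,k}` elements. -/
theorem statement4 (f : ℝ → ℝ)
    (hmaps : Set.MapsTo f (Set.Icc (1 : ℝ) 4) (Set.Icc (1 : ℝ) 4))
    (hcont : ContinuousOn f (Set.Icc (1 : ℝ) 4))
    (hf1 : f 1 = 4) (hf3 : f 3 = 4) (hf2 : f 2 = 1) (hf4 : f 4 = 2)
    (haff1 : AffOn f 1 2) (haff2 : AffOn f 2 3) (haff3 : AffOn f 3 4)
    (a : ℕ → ℤ)
    (haLow : ∀ k : ℕ, 1 ≤ k → k ≤ 3 - 1 → a k = 2 ^ (k + 1) - 1)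
    (haRec : ∀ k : ℕ, 3 ≤ k →
      a k = 3 * a (k - 1) - ∑ i ∈ Finset.Icc 2 (3 - 1), a (k - i))
    (k : ℕ) (hk : 0 < k) :
    {x ∈ Set.Icc (1 : ℝ) 4 | f^[k] x = x}.Finite ∧
      ({x ∈ Set.Icc (1 : ℝ) 4 | f^[k] x = x}.ncard : ℤ) = a k := by
  obtain ⟨m, rfl⟩ : ∃ m, k = m + 1 := ⟨k - 1, by omega⟩
  set FixS := {x ∈ Set.Icc (1 : ℝ) 4 | f^[m+1] x = x} with hFdef
  set itin : ℝ → (Fin (m+1) → Fin 3) := fun x j => sym (f^[j.val] x) with hitindef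
  set A : Set (Fin (m+1) → Fin 3) := {s | ∀ j, Adj (s j) (s (j+1))} with hAdef
  have hmapsTo : Set.MapsTo itin FixS A := fun x hx j =>
    itin_adj hmaps hf1 hf3 hf2 hf4 haff1 haff2 haff3 m hx.1 hx.2 j
  have hinj : Set.InjOn itin FixS := by
    intro x hx y hy hxy
    have ex : x = Phi m (itin x) :=
      uniq_dir hmaps hf1 hf3 hf2 hf4 haff1 haff2 haff3 m hx.1 hx.2
    have ey : y = Phi m (itin y) :=
      uniq_dir hmaps hf1 hf3 hf2 hf4 haff1 haff2 haff3 m hy.1 hy.2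
    rw [ex, ey, hxy]
  have hsurj : Set.SurjOn itin FixS A := by
    intro s hs
    have h := exists_dir hmaps hf1 hf3 hf2 hf4 haff1 haff2 haff3 m s hs
    exact ⟨Phi m s, ⟨h.1, h.2.1⟩, funext h.2.2⟩
  have himg : itin '' FixS = A := by
    apply Set.Subset.antisymm _ hsurj
    rintro y ⟨x, hx, rfl⟩
    exact hmapsTo hx
  have hAfin : A.Finite := Set.toFinite A
  have hFin : FixS.Finite := Set.Finite.of_finite_image (himg ▸ hAfin) hinj
  refine ⟨hFin, ?_⟩
  have h1 : FixS.ncard = A.ncard := by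
    rw [← himg, Set.ncard_image_of_injOn hinj]
  have h2 : A.ncard = Nat.card (CycT m) := by
    rw [← Nat.card_coe_set_eq]
    exact Nat.card_congr (Equiv.subtypeEquivRight fun s => Iff.rfl)
  rw [h1, h2]
  exact card_cyc_int a haLow haRec m
end

section
/- For every integer n ≥ 3, the generating function of the sequence a_{n,k} is (3z − Σ_{k=2}^{n−1} k·z^k) / (1 − 3z + Σ_{k=2}^{n−1} z^k); that is, as formal power series over ℤ, (1 − 3z + Σ_{k=2}^{n−1} z^k) · (Σ_{k≥1} a_{n,k} z^k) = 3z − Σ_{k=2}^{n−1} k·z^k. -/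
open PowerSeries

private lemma geo_sum (t : ℕ) : ∑ j ∈ Finset.Icc 1 t, ((2:ℤ)^(j+1) - 1) = 2^(t+2) - t - 4 := by
  induction t with
  | zero => simp
  | succ t ih =>
    rw [Finset.sum_Icc_succ_top (by omega), ih]
    push_cast
    ring

/-- For `n ≥ 3`, the generating function of `a_{n,k}` is
`(3z - ∑_{k=2}^{n-1} k z^k) / (1 - 3z + ∑_{k=2}^{n-1} z^k)`. -/
theorem statement7 (n : ℕ) (hn : 3 ≤ n) (a : ℕ → ℤ)
    (haLow : ∀ k : ℕ, 1 ≤ k → k ≤ n - 1 → a k = 2 ^ (k + 1) - 1)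
    (haRec : ∀ k : ℕ, n ≤ k →
      a k = 3 * a (k - 1) - ∑ i ∈ Finset.Icc 2 (n - 1), a (k - i)) :
    ((1 : PowerSeries ℤ) - PowerSeries.C (3 : ℤ) * PowerSeries.X
        + ∑ k ∈ Finset.Icc 2 (n - 1), PowerSeries.X ^ k) *
      (PowerSeries.mk fun k => if k = 0 then 0 else a k)
    = PowerSeries.C (3 : ℤ) * PowerSeries.X
        - ∑ k ∈ Finset.Icc 2 (n - 1), PowerSeries.C (k : ℤ) * PowerSeries.X ^ k := by
  apply PowerSeries.ext
  intro m
  rw [add_mul, sub_mul, one_mul, Finset.sum_mul, mul_assoc]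
  rw [map_add, map_sub, map_sub, coeff_C_mul, coeff_C_mul, map_sum, map_sum]
  have hX : (coeff m) (X * (PowerSeries.mk fun k => if k = 0 then (0:ℤ) else a k))
      = if 1 ≤ m then (if m - 1 = 0 then 0 else a (m-1)) else 0 := by
    rw [← pow_one (X : PowerSeries ℤ), coeff_X_pow_mul', coeff_mk]
  rw [hX, coeff_mk]
  simp only [coeff_X_pow_mul', coeff_mk, coeff_C_mul, coeff_X_pow, coeff_X]
  rw [Finset.sum_congr rfl (fun k _ => by rw [mul_ite, mul_one, mul_zero] : ∀ k ∈ Finset.Icc 2 (n-1), (k:ℤ) * (if m = k then (1:ℤ) else 0) = if m = k then (k:ℤ) else 0), Finset.sum_ite_eq]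
  rcases Nat.lt_or_ge m n with hmn | hmn
  · -- m < n
    rcases Nat.lt_or_ge m 2 with hm2 | hm2
    · -- m = 0 or m = 1
      interval_cases m
      · simp
      · have h1 : a 1 = 3 := by rw [haLow 1 le_rfl (by omega)]; norm_num
        have hns : ∀ k ∈ Finset.Icc 2 (n-1), (if k ≤ 1 then (if 1 - k = 0 then (0:ℤ) else a (1-k)) else 0) = 0 := by
          intro k hk
          rw [Finset.mem_Icc] at hk
          rw [if_neg (by omega)]
        rw [Finset.sum_congr rfl hns, Finset.sum_const_zero]
        have : (1:ℕ) ∉ Finset.Icc 2 (n-1) := by simp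
        simp [h1, this]
    · -- 2 ≤ m ≤ n - 1
      have hmn1 : m ≤ n - 1 := by omega
      have hmem : m ∈ Finset.Icc 2 (n-1) := Finset.mem_Icc.mpr ⟨hm2, hmn1⟩
      have ham : a m = 2^(m+1) - 1 := haLow m (by omega) hmn1
      have ham1 : a (m-1) = 2^(m-1+1) - 1 := haLow (m-1) (by omega) (by omega)
      have hsum : ∑ k ∈ Finset.Icc 2 (n-1), (if k ≤ m then (if m - k = 0 then (0:ℤ) else a (m-k)) else 0)
          = 2^m - m - 2 := by
        rw [← Finset.sum_subset (Finset.Icc_subset_Icc_right hmn1 :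
            Finset.Icc 2 m ⊆ Finset.Icc 2 (n-1))
          (fun x hx hx' => by
            rw [Finset.mem_Icc] at hx hx'
            rw [if_neg (by omega)])]
        have hcongr : ∀ k ∈ Finset.Icc 2 m,
            (if k ≤ m then (if m - k = 0 then (0:ℤ) else a (m-k)) else 0)
            = if m - k = 0 then (0:ℤ) else 2^(m-k+1) - 1 := by
          intro k hk
          rw [Finset.mem_Icc] at hk
          rw [if_pos hk.2]
          by_cases h0 : m - k = 0
          · rw [if_pos h0, if_pos h0]
          · rw [if_neg h0, if_neg h0, haLow (m-k) (by omega) (by omega)]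
        rw [Finset.sum_congr rfl hcongr]
        have step : (∑ k ∈ Finset.Icc 2 m, if m - k = 0 then (0:ℤ) else 2^(m-k+1) - 1)
            = ∑ j ∈ Finset.Icc 0 (m-2), (if j = 0 then (0:ℤ) else 2^(j+1) - 1) := by
          apply Finset.sum_nbij' (i := fun k => m - k) (j := fun j => m - j)
          · intro k hk; simp only [Finset.mem_Icc] at *; omega
          · intro j hj; simp only [Finset.mem_Icc] at *; omega
          · intro k hk; simp only [Finset.mem_Icc] at hk; omega
          · intro j hj; simp only [Finset.mem_Icc] at hj; omega
          · intro k hk; rfl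
        rw [step]
        have step2 : (∑ j ∈ Finset.Icc 0 (m-2), (if j = 0 then (0:ℤ) else 2^(j+1) - 1))
            = ∑ j ∈ Finset.Icc 1 (m-2), ((2:ℤ)^(j+1) - 1) := by
          rw [show Finset.Icc 0 (m-2) = insert 0 (Finset.Icc 1 (m-2)) by
            ext x; simp [Finset.mem_Icc]; omega]
          rw [Finset.sum_insert (by simp), if_pos rfl, zero_add]
          apply Finset.sum_congr rfl
          intro j hj
          simp only [Finset.mem_Icc] at hj
          rw [if_neg (by omega)]
        rw [step2, geo_sum]
        have h1 : m - 2 + 2 = m := by omega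
        have h2 : ((m - 2 : ℕ) : ℤ) = (m : ℤ) - 2 := by omega
        rw [h1, h2]
        ring
      have c0 : ¬(m = 0) := by omega
      have c1 : (1:ℕ) ≤ m := by omega
      have c2 : ¬(m - 1 = 0) := by omega
      have c3 : ¬(m = 1) := by omega
      rw [hsum, if_neg c0, if_pos c1, if_neg c2, if_neg c3, if_pos hmem, ham, ham1]
      have h2 : (2:ℤ)^(m+1) = 2 * 2^m := by ring
      have h3 : (2:ℤ)^(m-1+1) = 2^m := by rw [show m - 1 + 1 = m by omega]
      rw [h2, h3]
      ring
  · -- n ≤ m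
    have hrec := haRec m hmn
    have hsum : ∑ k ∈ Finset.Icc 2 (n-1), (if k ≤ m then (if m - k = 0 then (0:ℤ) else a (m-k)) else 0)
        = ∑ k ∈ Finset.Icc 2 (n-1), a (m-k) := by
      apply Finset.sum_congr rfl
      intro k hk
      rw [Finset.mem_Icc] at hk
      rw [if_pos (by omega), if_neg (by omega)]
    have c0 : ¬(m = 0) := by omega
    have c1 : (1:ℕ) ≤ m := by omega
    have c2 : ¬(m - 1 = 0) := by omega
    have c3 : ¬(m = 1) := by omega
    have c4 : m ∉ Finset.Icc 2 (n-1) := by simp only [Finset.mem_Icc]; omega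
    rw [hsum, if_neg c0, if_pos c1, if_neg c2, if_neg c3, if_neg c4]
    linarith [hrec]
end

section
/- For every integer n ≥ 1, the generating function of the sequence b_{n,k} is (z + Σ_{k=2}^{2n} (−1)^k k·z^k) / (1 − z − Σ_{k=2}^{2n} (−1)^k z^k); that is, as formal power series over ℤ, (1 − z − Σ_{k=2}^{2n} (−1)^k z^k) · (Σ_{k≥1} b_{n,k} z^k) = z + Σ_{k=2}^{2n} (−1)^k k·z^k. -/
lemma helper1 (c : ℤ) : ∀ N : ℕ, ∑ t ∈ Finset.range N, (2:ℤ)^t * (2*t + c)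
    = 2^N * (2*N + c - 4) - (c - 4) := by
  intro N
  induction N with
  | zero => simp
  | succ N ih => rw [Finset.sum_range_succ, ih]; push_cast; ring

lemma helper2 : ∀ N : ℕ, ∑ t ∈ Finset.range N, ((2:ℤ)^(t+2) - 1) = 2^(N+2) - 4 - N := by
  intro N
  induction N with
  | zero => simp
  | succ N ih => rw [Finset.sum_range_succ, ih]; push_cast; ring

lemma key (n : ℕ) (hn : 1 ≤ n) (b : ℕ → ℤ)
    (hb1 : ∀ k : ℕ, 1 ≤ k → k ≤ n → b (2 * k - 1) = 1)
    (hb2 : ∀ k : ℕ, n + 1 ≤ k → k ≤ 2 * n →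
      b (2 * k - 1) = 2 ^ (k - n - 1) * (2 * (k : ℤ) - 1) + 1)
    (hb3 : ∀ k : ℕ, 1 ≤ k → k ≤ 2 * n → b (2 * k) = 2 ^ (k + 1) - 1)
    (hbRec : ∀ k : ℕ, 4 * n + 1 ≤ k →
      b k = 3 * b (k - 2) - ∑ i ∈ Finset.Icc 2 (2 * n), b (k - 2 * i)) :
    ∀ j : ℕ, b (2*n+2+j) = 2 * b (2*n+j) + b (j+1) := by
  intro j
  induction j using Nat.strong_induction_on with
  | _ j ih =>
  by_cases hc1 : j + 2 ≤ 2*n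
  · -- small range: explicit formulas
    rcases Nat.even_or_odd j with ⟨t, rfl⟩ | ⟨t, rfl⟩
    · rw [show 2*n+2+(t+t) = 2*(n+1+t) from by ring,
          show 2*n+(t+t) = 2*(n+t) from by ring,
          show (t+t)+1 = 2*(t+1)-1 from by omega,
          hb3 (n+1+t) (by omega) (by omega), hb3 (n+t) (by omega) (by omega),
          hb1 (t+1) (by omega) (by omega)]
      ring
    · rw [show 2*n+2+(2*t+1) = 2*(n+t+2)-1 from by omega,
          show 2*n+(2*t+1) = 2*(n+t+1)-1 from by omega,
          show (2*t+1)+1 = 2*(t+1) from by ring,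
          hb2 (n+t+2) (by omega) (by omega), hb2 (n+t+1) (by omega) (by omega),
          hb3 (t+1) (by omega) (by omega),
          show n+t+2-n-1 = t+1 from by omega,
          show n+t+1-n-1 = t from by omega]
      push_cast
      ring
  · by_cases hc2 : j = 2*n - 1
    · -- m = 4n+1
      obtain ⟨p, rfl⟩ : ∃ p, n = p + 1 := ⟨n - 1, by omega⟩
      obtain rfl : j = 2*p+1 := by omega
      rw [show 2*(p+1)+2+(2*p+1) = 4*p+5 from by ring,
          show 2*(p+1)+(2*p+1) = 4*p+3 from by ring,
          show (2*p+1)+1 = 2*(p+1) from by ring]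
      have hR := hbRec (4*p+5) (by omega)
      rw [show 4*p+5-2 = 4*p+3 from by omega] at hR
      have hsum : ∑ i ∈ Finset.Icc 2 (2*(p+1)), b (4*p+5-2*i)
          = ∑ x ∈ Finset.Ioc 0 (2*p+1), b (2*x-1) := by
        apply Finset.sum_nbij' (fun i => 2*p+3-i) (fun x => 2*p+3-x)
        · intro a ha; simp only [Finset.mem_Icc, Finset.mem_Ioc] at *; omega
        · intro a ha; simp only [Finset.mem_Icc, Finset.mem_Ioc] at *; omega
        · intro a ha; simp only [Finset.mem_Icc] at ha; omega
        · intro a ha; simp only [Finset.mem_Ioc] at ha; omega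
        · intro a ha; simp only [Finset.mem_Icc] at ha; congr 1; omega
      rw [hsum, ← Finset.sum_Ioc_consecutive (fun x => b (2*x-1))
            (show 0 ≤ p+1 by omega) (show p+1 ≤ 2*p+1 by omega)] at hR
      have h1 : ∑ x ∈ Finset.Ioc 0 (p+1), b (2*x-1) = (p+1 : ℤ) := by
        have hco : ∀ x ∈ Finset.Ioc 0 (p+1), b (2*x-1) = 1 := by
          intro x hx
          simp only [Finset.mem_Ioc] at hx
          exact hb1 x hx.1 (by omega)
        rw [Finset.sum_congr rfl hco, Finset.sum_const, Nat.card_Ioc]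
        simp
      have h2 : ∑ x ∈ Finset.Ioc (p+1) (2*p+1), b (2*x-1)
          = ∑ t ∈ Finset.range p, ((2:ℤ)^t * (2*t + (2*p+3)) + 1) := by
        apply Finset.sum_nbij' (fun x => x-(p+2)) (fun t => p+2+t)
        · intro a ha; simp only [Finset.mem_Ioc, Finset.mem_range] at *; omega
        · intro a ha; simp only [Finset.mem_Ioc, Finset.mem_range] at *; omega
        · intro a ha; simp only [Finset.mem_Ioc] at ha; omega
        · intro a ha; simp only [Finset.mem_range] at ha; omega
        · intro a ha
          simp only [Finset.mem_Ioc] at ha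
          rw [hb2 a (by omega) (by omega),
              show a-(p+1)-1 = a-(p+2) from by omega]
          have hc : (2 * (a:ℤ) - 1) = 2*((a-(p+2) : ℕ):ℤ) + (2*(p:ℤ)+3) := by omega
          rw [hc]
      rw [h1, h2, Finset.sum_add_distrib, helper1 (2*(p:ℤ)+3) p,
          Finset.sum_const, Finset.card_range] at hR
      rw [hR, show 4*p+3 = 2*(2*(p+1))-1 from by omega,
          hb2 (2*(p+1)) (by omega) (by omega),
          show 2*(p+1)-(p+1)-1 = p from by omega,
          hb3 (p+1) (by omega) (by omega)] 
      push_cast [smul_eq_mul]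
      ring
    · by_cases hc3 : j = 2*n
      · -- m = 4n+2
        subst hc3
        have hval : b (2*n+1) = 2*(n:ℤ)+2 := by
          rw [show 2*n+1 = 2*(n+1)-1 from by omega, hb2 (n+1) (by omega) (by omega),
              show n+1-n-1 = 0 from by omega]
          push_cast
          ring
        rw [show 2*n+2+2*n = 2*(2*n+1) from by ring,
            show 2*n+2*n = 2*(2*n) from by ring]
        have hR := hbRec (2*(2*n+1)) (by omega)
        rw [show 2*(2*n+1)-2 = 2*(2*n) from by omega] at hR
        have hsum : ∑ i ∈ Finset.Icc 2 (2*n), b (2*(2*n+1)-2*i)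
            = ∑ t ∈ Finset.range (2*n-1), ((2:ℤ)^(t+2) - 1) := by
          apply Finset.sum_nbij' (fun i => 2*n-i) (fun t => 2*n-t)
          · intro a ha; simp only [Finset.mem_Icc, Finset.mem_range] at *; omega
          · intro a ha; simp only [Finset.mem_Icc, Finset.mem_range] at *; omega
          · intro a ha; simp only [Finset.mem_Icc] at ha; omega
          · intro a ha; simp only [Finset.mem_range] at ha; omega
          · intro a ha
            simp only [Finset.mem_Icc] at ha
            rw [show 2*(2*n+1)-2*a = 2*(2*n+1-a) from by omega,
                hb3 (2*n+1-a) (by omega) (by omega),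
                show 2*n+1-a+1 = (2*n-a)+2 from by omega]
        rw [hsum, helper2 (2*n-1)] at hR
        rw [hR, hval, hb3 (2*n) (by omega) (by omega),
            show 2*n-1+2 = 2*n+1 from by omega]
        have hcn : ((2*n-1 : ℕ) : ℤ) = 2*(n:ℤ)-1 := by omega
        rw [hcn]
        ring
      · -- j ≥ 2n+1 : induction step
        obtain ⟨l, rfl⟩ : ∃ l, j = 2*n+1+l := ⟨j - (2*n+1), by omega⟩
        have hR1 := hbRec (4*n+3+l) (by omega)
        have hR2 := hbRec (4*n+1+l) (by omega)
        rw [show 4*n+3+l-2 = 4*n+1+l from by omega] at hR1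
        rw [show 4*n+1+l-2 = 4*n-1+l from by omega] at hR2
        have hIH1 := ih (2*n-1+l) (by omega)
        rw [show 2*n+2+(2*n-1+l) = 4*n+1+l from by omega,
            show 2*n+(2*n-1+l) = 4*n-1+l from by omega,
            show 2*n-1+l+1 = 2*n+l from by omega] at hIH1
        have hIH2 := ih l (by omega)
        -- telescoping
        have hre : ∑ i ∈ Finset.Icc 2 (2*n), b (4*n+1+l-2*i)
            = ∑ i ∈ Finset.Icc 3 (2*n+1), b (4*n+3+l-2*i) := by
          apply Finset.sum_nbij' (fun i => i+1) (fun i => i-1)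
          · intro a ha; simp only [Finset.mem_Icc] at *; omega
          · intro a ha; simp only [Finset.mem_Icc] at *; omega
          · intro a ha; simp only [Finset.mem_Icc] at ha; omega
          · intro a ha; simp only [Finset.mem_Icc] at ha; omega
          · intro a ha; simp only [Finset.mem_Icc] at ha; congr 1; omega
        have hsplit : ∑ i ∈ Finset.Icc 2 (2*n), b (4*n+3+l-2*i) + b (4*n+3+l-2*(2*n+1))
            = b (4*n+3+l-2*2) + ∑ i ∈ Finset.Icc 3 (2*n+1), b (4*n+3+l-2*i) := by
          rw [← Finset.sum_Icc_succ_top (show 2 ≤ 2*n+1 from by omega)]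
          rw [show Finset.Icc 2 (2*n+1) = insert 2 (Finset.Icc 3 (2*n+1)) from by
                ext x; simp only [Finset.mem_Icc, Finset.mem_insert]; omega,
              Finset.sum_insert (by simp)]
        rw [show 4*n+3+l-2*(2*n+1) = l+1 from by omega,
            show 4*n+3+l-2*2 = 4*n-1+l from by omega] at hsplit
        rw [← hre] at hsplit
        rw [show 2*n+2+(2*n+1+l) = 4*n+3+l from by omega,
            show 2*n+(2*n+1+l) = 4*n+1+l from by omega,
            show 2*n+1+l+1 = 2*n+2+l from by omega]
        linarith [hR1, hR2, hIH1, hIH2, hsplit]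

open PowerSeries

lemma P1 (M : ℕ) (hM : 2 ≤ M) :
    (1 + X) * (∑ k ∈ Finset.Icc 2 M, C (R := ℤ) ((-1)^k) * X^k)
      = X^2 + C (R := ℤ) ((-1)^M) * X^(M+1) := by
  induction M, hM using Nat.le_induction with
  | base =>
    rw [show Finset.Icc 2 2 = {2} from rfl, Finset.sum_singleton]
    simp
    ring
  | succ M hM ih =>
    rw [Finset.sum_Icc_succ_top (by omega), mul_add, ih, pow_succ ((-1):ℤ) M,
        map_mul, map_neg, map_one]
    ring

lemma P2 (M : ℕ) (hM : 2 ≤ M) :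
    (1 + X) * (∑ k ∈ Finset.Icc 2 M, C (R := ℤ) ((-1)^k * k) * X^k)
      = C (R := ℤ) 2 * X^2 + (∑ k ∈ Finset.Icc 3 M, C (R := ℤ) ((-1)^k) * X^k)
        + C (R := ℤ) ((-1)^M * M) * X^(M+1) := by
  induction M, hM using Nat.le_induction with
  | base =>
    rw [show Finset.Icc 2 2 = {2} from rfl, Finset.sum_singleton,
        show Finset.Icc 3 2 = ∅ from rfl, Finset.sum_empty]
    norm_num
    ring
  | succ M hM ih =>
    rw [Finset.sum_Icc_succ_top (show 2 ≤ M+1 by omega), mul_add, ih,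
        Finset.sum_Icc_succ_top (show 3 ≤ M+1 by omega), pow_succ ((-1):ℤ) M]
    push_cast
    rw [map_mul, map_mul]
    rw [mul_neg_one, map_neg, map_add, map_one]
    ring

open PowerSeries

lemma P3 (n : ℕ) (hn : 1 ≤ n) (b : ℕ → ℤ)
    (hb1 : ∀ k : ℕ, 1 ≤ k → k ≤ n → b (2 * k - 1) = 1)
    (hb2 : ∀ k : ℕ, n + 1 ≤ k → k ≤ 2 * n →
      b (2 * k - 1) = 2 ^ (k - n - 1) * (2 * (k : ℤ) - 1) + 1)
    (hb3 : ∀ k : ℕ, 1 ≤ k → k ≤ 2 * n → b (2 * k) = 2 ^ (k + 1) - 1)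
    (hkey : ∀ j : ℕ, b (2*n+2+j) = 2 * b (2*n+j) + b (j+1)) :
    (1 - C (R := ℤ) 2 * X^2 - X^(2*n+1)) * (PowerSeries.mk fun k => if k = 0 then 0 else b k)
      = X + C (R := ℤ) 3 * X^2 + (∑ k ∈ Finset.Icc 3 (2*n), C (R := ℤ) ((-1)^k) * X^k)
        + C (R := ℤ) (2*(n:ℤ)) * X^(2*n+1) := by
  set F : PowerSeries ℤ := PowerSeries.mk fun k => if k = 0 then 0 else b k with hF
  have expand : (1 - C (R := ℤ) 2 * X^2 - X^(2*n+1)) * F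
      = F - C (R := ℤ) 2 * (F * X^2) - F * X^(2*n+1) := by ring
  rw [expand]
  ext m
  have hsumc : (coeff (R := ℤ) m) (∑ k ∈ Finset.Icc 3 (2*n), C (R := ℤ) ((-1)^k) * X^k)
      = if m ∈ Finset.Icc 3 (2*n) then ((-1):ℤ)^m else 0 := by
    rw [map_sum,
        Finset.sum_congr rfl (fun k _ => by
          rw [coeff_C_mul, coeff_X_pow, mul_ite, mul_one, mul_zero])]
    exact Finset.sum_ite_eq _ m _
  rw [map_sub, map_sub, coeff_C_mul, coeff_mul_X_pow', coeff_mul_X_pow',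
      map_add, map_add, map_add, coeff_X, coeff_C_mul, coeff_X_pow, coeff_C_mul,
      coeff_X_pow, hsumc, hF]
  simp only [coeff_mk, Finset.mem_Icc]
  by_cases h0 : m = 0
  · subst h0
    norm_num [show ¬(2*n+1 ≤ 0) from by omega, show ¬((0:ℕ) = 2*n+1) from by omega]
  by_cases h1 : m = 1
  · subst h1
    have hv : b 1 = 1 := by have := hb1 1 le_rfl hn; simpa using this
    norm_num [hv, show ¬(2*n+1 ≤ 1) from by omega, show ¬((1:ℕ) = 2*n+1) from by omega,
      show ¬(3 ≤ 1 ∧ 1 ≤ 2*n) from by omega, Finset.mem_Icc]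
  by_cases h2 : m = 2
  · subst h2
    have hv : b 2 = 3 := by have := hb3 1 (le_refl 1) (by omega); norm_num at this; omega
    norm_num [hv, show ¬(2*n+1 ≤ 2) from by omega, show ¬((2:ℕ) = 2*n+1) from by omega,
      show ¬(3 ≤ 2 ∧ 2 ≤ 2*n) from by omega, Finset.mem_Icc]
  by_cases hmid : m ≤ 2*n
  · -- 3 ≤ m ≤ 2n
    have c1 : 2 ≤ m := by omega
    have c2 : ¬ (2*n+1 ≤ m) := by omega
    have c3 : 3 ≤ m := by omega
    have c4 : ¬ (m-2 = 0) := by omega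
    simp only [if_pos c1, if_neg c2, if_pos (And.intro c3 hmid), if_neg c4, if_neg h0,
        if_neg h1, if_neg h2, if_neg (show ¬ m = 2*n+1 by omega)]
    rcases Nat.even_or_odd m with ⟨t, hm⟩ | ⟨t, hm⟩
    · obtain ⟨s, rfl⟩ : ∃ s, m = 2*s+4 := ⟨(m-4)/2, by omega⟩
      rw [show 2*s+4 = 2*(s+2) from by ring, show 2*(s+2)-2 = 2*(s+1) from by omega,
          hb3 (s+2) (by omega) (by omega), hb3 (s+1) (by omega) (by omega),
          Even.neg_one_pow ⟨s+2, by ring⟩]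
      push_cast
      ring
    · obtain ⟨s, rfl⟩ : ∃ s, m = 2*s+3 := ⟨(m-3)/2, by omega⟩
      rw [show 2*s+3 = 2*(s+2)-1 from by omega, show 2*(s+2)-1-2 = 2*(s+1)-1 from by omega,
          hb1 (s+2) (by omega) (by omega), hb1 (s+1) (by omega) (by omega),
          Odd.neg_one_pow ⟨s+1, by omega⟩]
      ring
  by_cases htop : m = 2*n+1
  · subst htop
    have hv1 : b (2*n+1) = 2*(n:ℤ)+2 := by
      have := hb2 (n+1) (by omega) (by omega)
      rw [show 2*(n+1)-1 = 2*n+1 from by omega, show n+1-n-1 = 0 from by omega] at this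
      push_cast at this
      linarith
    have hv2 : b (2*n+1-2) = 1 := by
      have := hb1 n hn le_rfl
      rw [show 2*n-1 = 2*n+1-2 from by omega] at this
      exact this
    simp only [show (2:ℕ) ≤ 2*n+1 from by omega, show 2*n+1 ≤ 2*n+1 from le_rfl,
        show ¬ (2*n+1 = 0) from by omega, show ¬ ((2:ℕ)*n+1 = 1) from by omega,
        show ¬ ((2:ℕ)*n+1 = 2) from by omega, show ¬ (2*n+1-2 = 0) from by omega,
        show 2*n+1-(2*n+1) = 0 from by omega, hv1, hv2,
        show ¬ (3 ≤ 2*n+1 ∧ 2*n+1 ≤ 2*n) from by omega,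
        if_true, if_false, ite_true, ite_false, eq_self_iff_true, not_true, not_false_iff]
    norm_num
  · -- m ≥ 2n+2
    obtain ⟨j, rfl⟩ : ∃ j, m = 2*n+2+j := ⟨m - (2*n+2), by omega⟩
    have hkj := hkey j
    simp only [show (2:ℕ) ≤ 2*n+2+j from by omega, show 2*n+1 ≤ 2*n+2+j from by omega,
        show ¬ (2*n+2+j = 0) from by omega, show ¬ ((2:ℕ)*n+2+j = 1) from by omega,
        show ¬ ((2:ℕ)*n+2+j = 2) from by omega,
        show 2*n+2+j-2 = 2*n+j from by omega,
        show 2*n+2+j-(2*n+1) = j+1 from by omega,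
        show ¬ (2*n+j = 0) from by omega, show ¬ (j+1 = 0) from by omega,
        show ¬ (3 ≤ 2*n+2+j ∧ 2*n+2+j ≤ 2*n) from by omega,
        show ¬ (2*n+2+j = 2*n+1) from by omega,
        if_true, if_false, ite_true, ite_false]
    linarith

/-- For `n ≥ 1`, the generating function of `b_{n,k}` is
`(z + ∑_{k=2}^{2n} (-1)^k k z^k) / (1 - z - ∑_{k=2}^{2n} (-1)^k z^k)`. -/
theorem statement10 (n : ℕ) (hn : 1 ≤ n) (b : ℕ → ℤ)
    (hb1 : ∀ k : ℕ, 1 ≤ k → k ≤ n → b (2 * k - 1) = 1)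
    (hb2 : ∀ k : ℕ, n + 1 ≤ k → k ≤ 2 * n →
      b (2 * k - 1) = 2 ^ (k - n - 1) * (2 * (k : ℤ) - 1) + 1)
    (hb3 : ∀ k : ℕ, 1 ≤ k → k ≤ 2 * n → b (2 * k) = 2 ^ (k + 1) - 1)
    (hbRec : ∀ k : ℕ, 4 * n + 1 ≤ k →
      b k = 3 * b (k - 2) - ∑ i ∈ Finset.Icc 2 (2 * n), b (k - 2 * i)) :
    ((1 : PowerSeries ℤ) - PowerSeries.X
        - ∑ k ∈ Finset.Icc 2 (2 * n), PowerSeries.C (R := ℤ) ((-1) ^ k) * PowerSeries.X ^ k) *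
      (PowerSeries.mk fun k => if k = 0 then 0 else b k)
    = PowerSeries.X
        + ∑ k ∈ Finset.Icc 2 (2 * n),
            PowerSeries.C (R := ℤ) ((-1) ^ k * (k : ℤ)) * PowerSeries.X ^ k := by
  have hkey := key n hn b hb1 hb2 hb3 hbRec
  have hP3 := P3 n hn b hb1 hb2 hb3 hkey
  have h1X : (1 + X : PowerSeries ℤ) ≠ 0 := by
    intro h
    have := congrArg (PowerSeries.coeff (R := ℤ) 0) h
    simp at this
  apply mul_left_cancel₀ h1X
  have hP1 := P1 (2*n) (by omega)
  have hP2 := P2 (2*n) (by omega)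
  rw [Even.neg_one_pow ⟨n, by ring⟩, map_one, one_mul] at hP1
  rw [Even.neg_one_pow ⟨n, by ring⟩, one_mul] at hP2
  push_cast at hP2
  rw [show (C (R := ℤ)) 2 = 2 from map_ofNat _ 2] at hP2 hP3
  rw [show (C (R := ℤ)) 3 = 3 from map_ofNat _ 3] at hP3
  linear_combination (-(PowerSeries.mk fun k => if k = 0 then 0 else b k)) * hP1 - hP2 + hP3
end

section
/- For integers n ≥ 2, 2 ≤ j ≤ 2n+1, and 2 ≤ m ≤ 2n+1, the generating function of the sequence c_{j,m,n,k} is {(2n+1)z − 2[2n − (j−m)]z² − 3(j−m)z³} / {1 − (2n+1)z + [2n − (j−m)]z² + (j−m)z³}; that is, as formal power series over ℤ, (1 − (2n+1)z + [2n − (j−m)]z² + (j−m)z³) · (Σ_{k≥1} c_{j,m,n,k} z^k) = (2n+1)z − 2[2n − (j−m)]z² − 3(j−m)z³. -/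
/-- For `n ≥ 2`, `2 ≤ j ≤ 2n+1`, `2 ≤ m ≤ 2n+1`, the generating function of `c_{j,m,n,k}`
is `{(2n+1)z - 2[2n-(j-m)]z² - 3(j-m)z³} / {1 - (2n+1)z + [2n-(j-m)]z² + (j-m)z³}`. -/
theorem statement13 (n : ℕ) (hn : 2 ≤ n) (j m : ℤ)
    (hj1 : 2 ≤ j) (hj2 : j ≤ 2 * (n : ℤ) + 1)
    (hm1 : 2 ≤ m) (hm2 : m ≤ 2 * (n : ℤ) + 1)
    (c : ℕ → ℤ)
    (hc1 : c 1 = 2 * (n : ℤ) + 1)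
    (hc2 : c 2 = (2 * (n : ℤ) + 1) ^ 2 - 2 * (2 * (n : ℤ) - (j - m)))
    (hc3 : c 3 = (2 * (n : ℤ) + 1) ^ 3 - 6 * (n : ℤ) * (2 * (n : ℤ) + 1 - (j - m)))
    (hcRec : ∀ k : ℕ, 4 ≤ k →
      c k = (2 * (n : ℤ) + 1) * c (k - 1) - (2 * (n : ℤ) - (j - m)) * c (k - 2)
              - (j - m) * c (k - 3)) :
    ((1 : PowerSeries ℤ) - PowerSeries.C (2 * (n : ℤ) + 1) * PowerSeries.X
        + PowerSeries.C (2 * (n : ℤ) - (j - m)) * PowerSeries.X ^ 2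
        + PowerSeries.C (j - m) * PowerSeries.X ^ 3) *
      (PowerSeries.mk fun k => if k = 0 then 0 else c k)
    = PowerSeries.C (2 * (n : ℤ) + 1) * PowerSeries.X
        - PowerSeries.C (2 * (2 * (n : ℤ) - (j - m))) * PowerSeries.X ^ 2
        - PowerSeries.C (3 * (j - m)) * PowerSeries.X ^ 3 := by
  set a : ℤ := 2 * (n : ℤ) + 1 with ha
  set b : ℤ := 2 * (n : ℤ) - (j - m) with hb
  set e : ℤ := j - m with he
  set F : PowerSeries ℤ := PowerSeries.mk fun k => if k = 0 then 0 else c k with hF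
  rw [show ((1 : PowerSeries ℤ) - PowerSeries.C a * PowerSeries.X
        + PowerSeries.C b * PowerSeries.X ^ 2
        + PowerSeries.C e * PowerSeries.X ^ 3) * F
    = F - PowerSeries.C a * (F * PowerSeries.X ^ 1)
        + PowerSeries.C b * (F * PowerSeries.X ^ 2)
        + PowerSeries.C e * (F * PowerSeries.X ^ 3) by ring,
    show PowerSeries.C a * PowerSeries.X = PowerSeries.C a * PowerSeries.X ^ 1 by ring]
  ext k
  simp only [map_add, map_sub, PowerSeries.coeff_C_mul, PowerSeries.coeff_mul_X_pow',
    PowerSeries.coeff_X_pow, PowerSeries.coeff_C, hF, PowerSeries.coeff_mk]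
  match k with
  | 0 => simp
  | 1 => simp [hc1]
  | 2 =>
    simp [hc1, hc2]
    ring
  | 3 =>
    simp [hc1, hc2, hc3]
    ring
  | (k + 4) =>
    have h := hcRec (k + 4) (by omega)
    simp only [show k + 4 - 1 = k + 3 from rfl, show k + 4 - 2 = k + 2 from rfl,
      show k + 4 - 3 = k + 1 from rfl] at h ⊢
    simp [h]
    ring
end

section
/- For every integer n ≥ 2 and every positive integer k, c_{2,2n+1,n,k} = (2n−1)^k + 2; consequently this sequence satisfies c_{2,2n+1,n,k+1} = (2n−1)·c_{2,2n+1,n,k} − 4(n−1) for all positive integers k. -/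
/-- For `n ≥ 2`, taking `j = 2` and `m = 2n+1` (so `j - m = 1 - 2n`) in the definition of
`c_{j,m,n,k}`, we have `c_{2,2n+1,n,k} = (2n-1)^k + 2`, and consequently
`c_{2,2n+1,n,k+1} = (2n-1)·c_{2,2n+1,n,k} - 4(n-1)` for all positive integers `k`. -/
theorem statement14 (n : ℕ) (hn : 2 ≤ n) (c : ℕ → ℤ)
    (hc1 : c 1 = 2 * (n : ℤ) + 1)
    (hc2 : c 2 = (2 * (n : ℤ) + 1) ^ 2 - 2 * (2 * (n : ℤ) - (1 - 2 * (n : ℤ))))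
    (hc3 : c 3 = (2 * (n : ℤ) + 1) ^ 3
        - 6 * (n : ℤ) * (2 * (n : ℤ) + 1 - (1 - 2 * (n : ℤ))))
    (hcRec : ∀ k : ℕ, 4 ≤ k →
      c k = (2 * (n : ℤ) + 1) * c (k - 1)
              - (2 * (n : ℤ) - (1 - 2 * (n : ℤ))) * c (k - 2)
              - (1 - 2 * (n : ℤ)) * c (k - 3)) :
    (∀ k : ℕ, 1 ≤ k → c k = (2 * (n : ℤ) - 1) ^ k + 2) ∧
      (∀ k : ℕ, 1 ≤ k → c (k + 1) = (2 * (n : ℤ) - 1) * c k - 4 * ((n : ℤ) - 1)) := by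
  have key : ∀ k : ℕ, 1 ≤ k → c k = (2 * (n : ℤ) - 1) ^ k + 2 := by
    intro k
    induction k using Nat.strong_induction_on with
    | _ k ih =>
      intro hk
      match k, hk with
      | 1, _ => rw [hc1]; ring
      | 2, _ => rw [hc2]; ring
      | 3, _ => rw [hc3]; ring
      | (m+4), _ =>
        have h := hcRec (m+4) (by omega)
        simp only [show m+4-1 = m+3 from rfl, show m+4-2 = m+2 from rfl,
          show m+4-3 = m+1 from rfl] at h
        rw [h, ih (m+3) (by omega) (by omega), ih (m+2) (by omega) (by omega),
          ih (m+1) (by omega) (by omega)]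
        simp only [pow_succ]
        ring
  refine ⟨key, fun k hk => ?_⟩
  rw [key (k+1) (by omega), key k hk, pow_succ]
  ring
end

section
/- For integers n ≥ 2 and 1−n ≤ m ≤ n, and every positive integer k, Φ₁(k, φ_{d_{m,n}}) ≡ 0 (mod k), where φ_{d_{m,n}}(k) = d_{m,n,k}. -/
open scoped Classical

open Polynomial

section Dk
variable {R S : Type*} [CommRing R] [CommRing S]

/-- two-variable Dickson-like function: `Dk k (x+y) (x*y) = x^k + y^k`. -/
def Dk : ℕ → R → R → R
  | 0, _, _ => 2
  | 1, s, _ => s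
  | (k+2), s, q => s * Dk (k+1) s q - q * Dk k s q

@[simp] lemma Dk_zero (s q : R) : Dk 0 s q = 2 := rfl
@[simp] lemma Dk_one (s q : R) : Dk 1 s q = s := rfl
lemma Dk_add_two (k : ℕ) (s q : R) :
    Dk (k+2) s q = s * Dk (k+1) s q - q * Dk k s q := rfl

lemma Dk_map (f : R →+* S) (s q : R) : ∀ k, f (Dk k s q) = Dk k (f s) (f q) := by
  intro k
  induction k using Nat.twoStepInduction with
  | zero => simp [map_ofNat]
  | one => simp
  | more k ih1 ih2 => simp [Dk_add_two, ih1, ih2]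

lemma Dk_pow_add_pow (x y : R) : ∀ k, Dk k (x + y) (x * y) = x ^ k + y ^ k := by
  intro k
  induction k using Nat.twoStepInduction with
  | zero => simp; ring
  | one => simp
  | more k ih1 ih2 => rw [Dk_add_two, ih1, ih2]; ring

end Dk

lemma adjoinRoot_coe_dvd {A : Type*} [CommRing A] [Nontrivial A] {f : A[X]} (hf : f.Monic)
    (hdeg : 0 < f.natDegree) {c a : A}
    (h : algebraMap A (AdjoinRoot f) c ∣ algebraMap A (AdjoinRoot f) a) : c ∣ a := by
  obtain ⟨w, hw⟩ := h
  have hmod : C a %ₘ f = C a := by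
    refine (Polynomial.modByMonic_eq_self_iff hf).2 ?_
    calc (C a).degree ≤ 0 := degree_C_le
      _ < f.degree := by
        rw [degree_eq_natDegree hf.ne_zero]; exact_mod_cast hdeg
  have h1 : (AdjoinRoot.modByMonicHom hf (algebraMap A (AdjoinRoot f) a)).coeff 0 = a := by
    have h2 : algebraMap A (AdjoinRoot f) a = AdjoinRoot.mk f (C a) := rfl
    rw [h2, AdjoinRoot.modByMonicHom_mk, hmod, coeff_C]
    simp
  refine ⟨(AdjoinRoot.modByMonicHom hf w).coeff 0, ?_⟩
  rw [← h1, hw]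
  have h3 : algebraMap A (AdjoinRoot f) c * w = c • w := (Algebra.smul_def c w).symm
  rw [h3, map_smul]
  simp [coeff_smul]

lemma adjoinRoot_coe_inj {A : Type*} [CommRing A] [Nontrivial A] {f : A[X]} (hf : f.Monic)
    (hdeg : 0 < f.natDegree) {a b : A}
    (h : algebraMap A (AdjoinRoot f) a = algebraMap A (AdjoinRoot f) b) : a = b := by
  have : algebraMap A (AdjoinRoot f) (0:A) ∣ algebraMap A (AdjoinRoot f) (a - b) := by
    rw [map_sub, h, sub_self, map_zero]
  have := adjoinRoot_coe_dvd hf hdeg this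
  rw [zero_dvd_iff, sub_eq_zero] at this
  exact this

section generic
variable {A : Type*} [CommRing A] [Nontrivial A] (s q : A)

noncomputable def qpoly : A[X] := X^2 - C s * X + C q

lemma qpoly_eq : qpoly s q = X^2 + (C q - C s * X) := by unfold qpoly; ring

lemma qpoly_monic : (qpoly s q).Monic := by
  rw [qpoly_eq]
  apply Polynomial.monic_X_pow_add
  calc degree (C q - C s * X) ≤ max (C q).degree (C s * X).degree := degree_sub_le _ _
    _ < 2 := by
        apply max_lt
        · exact lt_of_le_of_lt degree_C_le (by norm_num)
        · exact lt_of_le_of_lt (degree_C_mul_X_le s) (by norm_num)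

lemma qpoly_natDegree : (qpoly s q).natDegree = 2 := by
  rw [qpoly_eq]
  have h : degree (C q - C s * X) < (2:ℕ) := by
    calc degree (C q - C s * X) ≤ max (C q).degree (C s * X).degree := degree_sub_le _ _
      _ < 2 := by
          apply max_lt
          · exact lt_of_le_of_lt degree_C_le (by norm_num)
          · exact lt_of_le_of_lt (degree_C_mul_X_le s) (by norm_num)
  have h2 : degree (C q - C s * X) < degree (X^2 : A[X]) := by
    rwa [degree_X_pow]
  have := degree_add_eq_left_of_degree_lt h2
  apply natDegree_eq_of_degree_eq_some
  rw [this, degree_X_pow]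
end generic

section roots
variable {A : Type*} [CommRing A] [Nontrivial A] (s q : A)

noncomputable def rootx : AdjoinRoot (qpoly s q) := AdjoinRoot.root _
noncomputable def rooty : AdjoinRoot (qpoly s q) :=
  algebraMap A (AdjoinRoot (qpoly s q)) s - rootx s q

lemma rootx_add_rooty : rootx s q + rooty s q = algebraMap A _ s := by
  unfold rooty; ring

lemma rootx_mul_rooty : rootx s q * rooty s q = algebraMap A _ q := by
  have h0 := AdjoinRoot.eval₂_root (qpoly s q)
  have h : rootx s q ^ 2 - algebraMap A (AdjoinRoot (qpoly s q)) s * rootx s q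
      + algebraMap A (AdjoinRoot (qpoly s q)) q = 0 := by
    rw [← h0]
    unfold qpoly rootx
    simp only [eval₂_add, eval₂_sub, eval₂_mul, eval₂_pow, eval₂_X, eval₂_C]
    rfl
  unfold rooty
  linear_combination -h
end roots

section generic2
variable {A : Type*} [CommRing A] [Nontrivial A] (s q : A)

lemma qpoly_natDegree_pos : 0 < (qpoly s q).natDegree := by
  rw [qpoly_natDegree]; norm_num

lemma Dk_comp (a b : ℕ) : Dk (a*b) s q = Dk a (Dk b s q) (q^b) := by
  apply adjoinRoot_coe_inj (qpoly_monic s q) (qpoly_natDegree_pos s q)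
  set φ := algebraMap A (AdjoinRoot (qpoly s q)) with hφ
  set x := rootx s q
  set y := rooty s q
  have hs : x + y = φ s := rootx_add_rooty s q
  have hq : x * y = φ q := rootx_mul_rooty s q
  calc φ (Dk (a*b) s q) = Dk (a*b) (φ s) (φ q) := Dk_map φ s q _
    _ = x^(a*b) + y^(a*b) := by rw [← hs, ← hq, Dk_pow_add_pow]
    _ = (x^b)^a + (y^b)^a := by rw [← pow_mul, ← pow_mul, Nat.mul_comm]
    _ = Dk a (x^b + y^b) (x^b * y^b) := (Dk_pow_add_pow _ _ _).symm
    _ = Dk a (φ (Dk b s q)) (φ (q^b)) := by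
        rw [Dk_map φ s q b, ← hs, ← hq, Dk_pow_add_pow x y b, map_pow, ← hq, mul_pow]
    _ = φ (Dk a (Dk b s q) (q^b)) := (Dk_map φ _ _ _).symm

lemma Dk_prime_sub (p : ℕ) (hp : p.Prime) : (p : A) ∣ Dk p s q - s^p := by
  apply adjoinRoot_coe_dvd (qpoly_monic s q) (qpoly_natDegree_pos s q)
  set φ := algebraMap A (AdjoinRoot (qpoly s q)) with hφ
  set x := rootx s q
  set y := rooty s q
  have hs : x + y = φ s := rootx_add_rooty s q
  have hq : x * y = φ q := rootx_mul_rooty s q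
  obtain ⟨r, hr⟩ := exists_add_pow_prime_eq hp x y
  have : φ (Dk p s q - s^p) = -(p * (x * y * r)) := by
    rw [map_sub, Dk_map φ s q p, ← hs, ← hq, Dk_pow_add_pow, map_pow, ← hs, hr]
    ring
  rw [this, map_natCast]
  exact dvd_neg.2 (Dvd.intro (x * y * r) rfl)
end generic2

noncomputable section wsec

abbrev A2 : Type := MvPolynomial (Fin 2) ℤ
def SS : A2 := MvPolynomial.X 0
def QQ : A2 := MvPolynomial.X 1

variable {p : ℕ} (hp : p.Prime)

/-- the cofactor polynomial `W` with `Dk p S Q = S^p + p * W`. -/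
def Wp (p : ℕ) (hp : p.Prime) : A2 := (Dk_prime_sub SS QQ p hp).choose

lemma Wp_spec (p : ℕ) (hp : p.Prime) : Dk p SS QQ - SS^p = (p : A2) * Wp p hp :=
  (Dk_prime_sub SS QQ p hp).choose_spec

def wint (p : ℕ) (hp : p.Prime) (u v : ℤ) : ℤ :=
  MvPolynomial.eval ![u, v] (Wp p hp)

lemma wint_spec (u v : ℤ) : Dk p u v = u^p + p * wint p hp u v := by
  have h := congrArg (MvPolynomial.eval ![u, v]) (Wp_spec p hp)
  simp only [map_sub, map_mul, map_pow, map_natCast] at h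
  have hD : MvPolynomial.eval ![u, v] (Dk p SS QQ) = Dk p u v := by
    rw [show (MvPolynomial.eval ![u,v] (Dk p SS QQ))
        = Dk p (MvPolynomial.eval ![u,v] SS) (MvPolynomial.eval ![u,v] QQ) from Dk_map _ _ _ _]
    simp [SS, QQ]
  have hS : MvPolynomial.eval ![u, v] SS = u := by simp [SS]
  rw [hD, hS] at h
  unfold wint
  linarith [h]

lemma wint_congr (c : ℕ) {u v u' v' : ℤ} (hu : (c:ℤ) ∣ u - u') (hv : (c:ℤ) ∣ v - v') :
    (c:ℤ) ∣ wint p hp u v - wint p hp u' v' := by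
  rw [← ZMod.intCast_zmod_eq_zero_iff_dvd]
  push_cast
  rw [sub_eq_zero]
  unfold wint
  have key : ∀ a b : ℤ, ((MvPolynomial.eval ![a, b] (Wp p hp) : ℤ) : ZMod c)
      = MvPolynomial.eval₂ (Int.castRingHom (ZMod c)) ![(a : ZMod c), (b : ZMod c)] (Wp p hp) := by
    intro a b
    have h0 : MvPolynomial.eval ![a,b] (Wp p hp)
        = MvPolynomial.eval₂ (RingHom.id ℤ) ![a,b] (Wp p hp) := rfl
    rw [h0, show (((MvPolynomial.eval₂ (RingHom.id ℤ) ![a,b] (Wp p hp) : ℤ)) : ZMod c)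
        = (Int.castRingHom (ZMod c)) (MvPolynomial.eval₂ (RingHom.id ℤ) ![a,b] (Wp p hp)) from rfl,
      MvPolynomial.eval₂_comp_left (Int.castRingHom (ZMod c)) (RingHom.id ℤ) ![a,b]]
    congr 1
    funext i; fin_cases i <;> simp
  rw [key u v, key u' v']
  have hcu : (u : ZMod c) = (u' : ZMod c) := by
    have := (ZMod.intCast_zmod_eq_zero_iff_dvd (u - u') c).2 hu
    push_cast at this
    linear_combination this
  have hcv : (v : ZMod c) = (v' : ZMod c) := by
    have := (ZMod.intCast_zmod_eq_zero_iff_dvd (v - v') c).2 hv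
    push_cast at this
    linear_combination this
  rw [hcu, hcv]
end wsec

lemma int_fermat {p : ℕ} (hp : p.Prime) (u : ℤ) : (p:ℤ) ∣ u^p - u := by
  haveI : Fact p.Prime := ⟨hp⟩
  rw [← ZMod.intCast_zmod_eq_zero_iff_dvd]
  push_cast
  rw [ZMod.pow_card]
  ring

lemma int_pow_lift {p : ℕ} (hp : p.Prime) {s : ℕ} (hs : 1 ≤ s) {x y : ℤ}
    (h : (p:ℤ)^s ∣ x - y) : (p:ℤ)^(s+1) ∣ x^p - y^p := by
  have hgeom : (∑ i ∈ Finset.range p, x ^ i * y ^ (p - 1 - i)) * (x - y) = x^p - y^p :=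
    geom_sum₂_mul x y p
  rw [← hgeom, pow_succ']
  have hpd : (p:ℤ) ∣ x - y := dvd_trans (dvd_pow_self (p:ℤ) (by omega)) h
  have hxy : (x : ZMod p) = (y : ZMod p) := by
    have h2 := (ZMod.intCast_zmod_eq_zero_iff_dvd (x - y) p).2 hpd
    push_cast at h2
    linear_combination h2
  have hdvd1 : (p:ℤ) ∣ ∑ i ∈ Finset.range p, x ^ i * y ^ (p - 1 - i) := by
    rw [← ZMod.intCast_zmod_eq_zero_iff_dvd]
    push_cast
    calc ∑ i ∈ Finset.range p, (x:ZMod p) ^ i * (y:ZMod p) ^ (p - 1 - i)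
        = ∑ i ∈ Finset.range p, (y:ZMod p) ^ (p-1) := by
          apply Finset.sum_congr rfl
          intro i hi
          rw [hxy, ← pow_add]
          congr 1
          have := Finset.mem_range.1 hi
          omega
      _ = 0 := by
          rw [Finset.sum_const, Finset.card_range, nsmul_eq_mul, ZMod.natCast_self, zero_mul]
  exact mul_dvd_mul hdvd1 h

lemma int_qlift {p : ℕ} (hp : p.Prime) (Q1 : ℤ) (r : ℕ) :
    (p:ℤ)^(r+1) ∣ Q1^(p^(r+1)) - Q1^(p^r) := by
  have h := dvd_sub_pow_of_dvd_sub (a := Q1^p) (b := Q1) (p := p) ?_ r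
  · have e1 : (Q1^p)^(p^r) = Q1^(p^(r+1)) := by
      rw [← pow_mul, pow_succ]
      ring_nf
    rw [e1] at h
    exact_mod_cast h
  · exact_mod_cast int_fermat hp Q1

lemma MD {p : ℕ} (hp : p.Prime) (s q : ℤ) (r t : ℕ) :
    (p:ℤ)^(r+1) ∣ Dk (p^(r+1)*t) s q - Dk (p^r*t) s q := by
  induction r with
  | zero =>
    have e0 : p^(0+1)*t = p*t := by ring
    have e0' : p^0*t = t := by ring
    rw [e0, e0', Dk_comp s q p t, wint_spec hp]
    have h1 : (p:ℤ) ∣ (Dk t s q)^p - Dk t s q := int_fermat hp _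
    have h2 : (p:ℤ) ∣ (p:ℤ) * wint p hp (Dk t s q) (q^t) := Dvd.intro _ rfl
    have h3 := dvd_add h1 h2
    rw [pow_one]
    convert h3 using 1
    · rfl
    ring
  | succ r ih =>
    have e1 : p^(r+1+1)*t = p * (p^(r+1)*t) := by ring
    have e2 : p^(r+1)*t = p * (p^r*t) := by ring
    have hU : Dk (p^(r+1+1)*t) s q = (Dk (p^(r+1)*t) s q)^p
        + p * wint p hp (Dk (p^(r+1)*t) s q) (q^(p^(r+1)*t)) := by
      rw [e1, Dk_comp s q p (p^(r+1)*t)]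
      exact wint_spec hp _ _
    have hU' : Dk (p^(r+1)*t) s q = (Dk (p^r*t) s q)^p
        + p * wint p hp (Dk (p^r*t) s q) (q^(p^r*t)) := by
      conv_lhs => rw [e2, Dk_comp s q p (p^r*t)]
      exact wint_spec hp _ _
    have key : Dk (p^(r+1+1)*t) s q - Dk (p^(r+1)*t) s q
        = ((Dk (p^(r+1)*t) s q)^p - (Dk (p^r*t) s q)^p)
          + (p:ℤ) * (wint p hp (Dk (p^(r+1)*t) s q) (q^(p^(r+1)*t))
                     - wint p hp (Dk (p^r*t) s q) (q^(p^r*t))) := by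
      linear_combination hU - hU'
    rw [key]
    have hv : ((p:ℤ))^(r+1) ∣ q^(p^(r+1)*t) - q^(p^r*t) := by
      have h3 : q^(p^(r+1)*t) = (q^t)^(p^(r+1)) := by rw [← pow_mul, Nat.mul_comm]
      have h4 : q^(p^r*t) = (q^t)^(p^r) := by rw [← pow_mul, Nat.mul_comm]
      rw [h3, h4]
      exact int_qlift hp (q^t) r
    have hu : ((p:ℤ))^(r+1) ∣ Dk (p^(r+1)*t) s q - Dk (p^r*t) s q := ih
    have hw : ((p:ℤ))^(r+1) ∣ wint p hp (Dk (p^(r+1)*t) s q) (q^(p^(r+1)*t))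
        - wint p hp (Dk (p^r*t) s q) (q^(p^r*t)) := by
      have h5 := wint_congr hp (p^(r+1)) (by push_cast; exact hu) (by push_cast; exact hv)
      push_cast at h5
      exact h5
    have hA : ((p:ℤ))^(r+1+1) ∣ (Dk (p^(r+1)*t) s q)^p - (Dk (p^r*t) s q)^p :=
      int_pow_lift hp (by omega) hu
    have hB : ((p:ℤ))^(r+1+1) ∣ (p:ℤ) * (wint p hp (Dk (p^(r+1)*t) s q) (q^(p^(r+1)*t))
        - wint p hp (Dk (p^r*t) s q) (q^(p^r*t))) := by
      rw [pow_succ']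
      exact mul_dvd_mul_left _ hw
    exact dvd_add hA hB

open ArithmeticFunction in
lemma ASM (s q : ℤ) (k : ℕ) (hk : 0 < k) :
    (k:ℤ) ∣ ∑ e ∈ k.divisors, (moebius e : ℤ) * Dk (k/e) s q := by
  have hk0 : k ≠ 0 := hk.ne'
  rw [Int.natCast_dvd]
  rw [Nat.dvd_iff_prime_pow_dvd_dvd]
  intro p r hpp hprk
  have hp : p.Prime := hpp
  rw [← Int.natCast_dvd]
  rcases Nat.eq_zero_or_pos r with hr | hr
  · simp [hr]
  -- p ∣ k
  have hpk : p ∣ k := dvd_trans (dvd_pow_self p hr.ne') hprk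
  set a := k.factorization p with ha
  have hra : r ≤ a := (Nat.Prime.pow_dvd_iff_le_factorization hp hk0).1 hprk
  have ha1 : 1 ≤ a := (Nat.Prime.pow_dvd_iff_le_factorization hp hk0).1 (by rwa [pow_one])
  -- reduce to p^a
  suffices hsuf : ((p:ℤ))^a ∣ ∑ e ∈ k.divisors, (moebius e : ℤ) * Dk (k/e) s q by
    have : ((p:ℤ))^r ∣ ((p:ℤ))^a := pow_dvd_pow _ hra
    push_cast
    exact dvd_trans this hsuf
  have haa : a - 1 + 1 = a := by omega
  set t := k / p^a with hts
  have hkts : k = p^a * t := (Nat.ordProj_mul_ordCompl_eq_self k p).symm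
  have hpt : ¬ p ∣ t := Nat.not_dvd_ordCompl hp hk0
  have ht0 : t ≠ 0 := by
    intro h; rw [h, Nat.mul_zero] at hkts; exact hk0 hkts
  -- split the sum
  have hsplit := Finset.sum_filter_add_sum_filter_not k.divisors (fun e => p ∣ e)
    (fun e => (moebius e : ℤ) * Dk (k/e) s q)
  rw [← hsplit]
  -- second sum: divisors of t
  have hset : k.divisors.filter (fun e => ¬ p ∣ e) = t.divisors := by
    ext e
    simp only [Finset.mem_filter, Nat.mem_divisors]
    constructor
    · rintro ⟨⟨hek, _⟩, hpe⟩
      refine ⟨?_, ht0⟩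
      have hcop : Nat.Coprime e (p^a) :=
        Nat.Coprime.pow_right _ (Nat.coprime_comm.1 ((Nat.Prime.coprime_iff_not_dvd hp).2 hpe))
      exact hcop.dvd_of_dvd_mul_left (by rwa [← hkts])
    · rintro ⟨het, _⟩
      refine ⟨⟨dvd_trans het ⟨p^a, by rw [hkts]; ring⟩, hk0⟩, fun hpe => hpt (dvd_trans hpe het)⟩
  -- first sum: e ↦ p * e' bijection with divisors (p^(a-1)*t)
  have hbij : (k.divisors.filter (fun e => p ∣ e)).sum (fun e => (moebius e : ℤ) * Dk (k/e) s q)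
      = ∑ e' ∈ (p^(a-1)*t).divisors, (moebius (p*e') : ℤ) * Dk (k/(p*e')) s q := by
    rw [Finset.sum_filter]
    rw [← Finset.sum_filter]
    apply Finset.sum_nbij' (fun e => e / p) (fun e' => p * e')
    · intro e he
      simp only [Finset.mem_filter, Nat.mem_divisors] at he
      obtain ⟨⟨hek, _⟩, hpe⟩ := he
      rw [Nat.mem_divisors]
      obtain ⟨e', rfl⟩ := hpe
      refine ⟨?_, ?_⟩
      · rw [Nat.mul_div_cancel_left _ hp.pos]
        have : p * e' ∣ p * (p^(a-1)*t) := by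
          rwa [show p * (p^(a-1)*t) = p^a * t from by
            rw [← mul_assoc, ← pow_succ', haa], ← hkts]
        exact (Nat.mul_dvd_mul_iff_left hp.pos).1 this
      · intro h0
        rw [Nat.mul_eq_zero] at h0
        rcases h0 with h0 | h0
        · exact (Nat.pow_pos (n := a-1) hp.pos).ne' h0
        · exact ht0 h0
    · intro e' he'
      rw [Nat.mem_divisors] at he'
      simp only [Finset.mem_filter, Nat.mem_divisors]
      refine ⟨⟨?_, hk0⟩, Dvd.intro _ rfl⟩
      calc p * e' ∣ p * (p^(a-1)*t) := Nat.mul_dvd_mul_left p he'.1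
        _ = p^a * t := by rw [← mul_assoc, ← pow_succ', haa]
        _ = k := hkts.symm
    · intro e he
      simp only [Finset.mem_filter] at he
      exact Nat.mul_div_cancel' he.2
    · intro e' _
      exact Nat.mul_div_cancel_left _ hp.pos
    · intro e he
      simp only [Finset.mem_filter] at he
      rw [Nat.mul_div_cancel' he.2]
  rw [hset, hbij]
  have hsub : t.divisors ⊆ (p^(a-1)*t).divisors := by
    intro e' he'
    rw [Nat.mem_divisors] at he' ⊢
    refine ⟨dvd_mul_of_dvd_right he'.1 _, ?_⟩
    exact Nat.mul_ne_zero (Nat.pow_pos (n := a-1) hp.pos).ne' ht0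
  have hvanish : ∀ e' ∈ (p^(a-1)*t).divisors, e' ∉ t.divisors →
      (moebius (p*e') : ℤ) * Dk (k/(p*e')) s q = 0 := by
    intro e' he' hne
    rw [Nat.mem_divisors] at he'
    have hpd : p ∣ e' := by
      by_contra hpe'
      apply hne
      rw [Nat.mem_divisors]
      refine ⟨?_, ht0⟩
      have hcop : Nat.Coprime e' (p^(a-1)) :=
        Nat.Coprime.pow_right _ (Nat.coprime_comm.1 ((Nat.Prime.coprime_iff_not_dvd hp).2 hpe'))
      exact hcop.dvd_of_dvd_mul_left he'.1
    have hnsf : ¬ Squarefree (p * e') := by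
      intro hsf
      obtain ⟨c, rfl⟩ := hpd
      have := hsf p (by exact ⟨c, by ring⟩)
      exact hp.not_isUnit (Nat.isUnit_iff.1 this ▸ (by simpa using this))
    rw [ArithmeticFunction.moebius_eq_zero_of_not_squarefree hnsf]
    simp
  rw [← Finset.sum_subset hsub hvanish, ← Finset.sum_add_distrib]
  apply Finset.dvd_sum
  intro e' he'
  rw [Nat.mem_divisors] at he'
  obtain ⟨het, -⟩ := he'
  have hpe' : ¬ p ∣ e' := fun h => hpt (h.trans het)
  have hcop : Nat.Coprime p e' := (Nat.Prime.coprime_iff_not_dvd hp).2 hpe'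
  have hmu : (moebius (p * e') : ℤ) = -(moebius e' : ℤ) := by
    rw [ArithmeticFunction.IsMultiplicative.map_mul_of_coprime
      ArithmeticFunction.isMultiplicative_moebius hcop,
      ArithmeticFunction.moebius_apply_prime hp]
    ring
  have hk1 : k / (p * e') = p^(a-1) * (t / e') := by
    rw [hkts, show p^a * t = p * (p^(a-1) * t) from by rw [← mul_assoc, ← pow_succ', haa],
      Nat.mul_div_mul_left _ _ hp.pos, Nat.mul_div_assoc _ het]
  have hk2 : k / e' = p^a * (t / e') := by
    rw [hkts, Nat.mul_div_assoc _ het]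
  rw [hk1, hk2, hmu]
  have hMD := MD hp s q (a-1) (t / e')
  rw [haa] at hMD
  have : (moebius (p*e') : ℤ) * Dk (p^(a-1) * (t/e')) s q + (moebius e' : ℤ) * Dk (p^a * (t/e')) s q
      = (moebius e' : ℤ) * (Dk (p^a * (t/e')) s q - Dk (p^(a-1) * (t/e')) s q) := by
    rw [hmu]; ring
  calc ((p:ℤ))^a ∣ (moebius e' : ℤ) * (Dk (p^a * (t/e')) s q - Dk (p^(a-1) * (t/e')) s q) :=
        Dvd.dvd.mul_left hMD _
    _ = -(moebius e' : ℤ) * Dk (p^(a-1) * (t/e')) s q + (moebius e' : ℤ) * Dk (p^a * (t/e')) s q := by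
        ring

lemma d_eq_Dk (n m : ℤ) (d : ℕ → ℤ)
    (hd1 : d 1 = n) (hd2 : d 2 = n ^ 2 + 2 * m)
    (hdRec : ∀ k : ℕ, 3 ≤ k → d k = n * d (k - 1) + m * d (k - 2)) :
    ∀ k : ℕ, 1 ≤ k → d k = Dk k n (-m) := by
  intro k
  induction k using Nat.twoStepInduction with
  | zero => omega
  | one => intro _; simpa using hd1
  | more j ih1 ih2 =>
    intro _
    rcases Nat.eq_zero_or_pos j with rfl | hj
    · rw [hd2, Dk_add_two]
      simp
      ring
    · have h3 : 3 ≤ j + 2 := by omega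
      rw [hdRec (j+2) h3]
      simp only [Nat.add_sub_cancel]
      have e1 : j + 2 - 1 = j + 1 := by omega
      rw [e1, ih2 (by omega), ih1 (by omega), Dk_add_two]
      ring

open ArithmeticFunction in
theorem statement15' (n m : ℤ)
    (d : ℕ → ℤ)
    (hd1 : d 1 = n) (hd2 : d 2 = n ^ 2 + 2 * m)
    (hdRec : ∀ k : ℕ, 3 ≤ k → d k = n * d (k - 1) + m * d (k - 2))
    (k : ℕ) (hk : 0 < k) :
    (k : ℤ) ∣ ∑ e ∈ k.divisors.filter (fun e => Squarefree e),
      (moebius e : ℤ) * d (k / e) := by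
  have h1 : ∑ e ∈ k.divisors.filter (fun e => Squarefree e), (moebius e : ℤ) * d (k / e)
      = ∑ e ∈ k.divisors, (moebius e : ℤ) * d (k / e) := by
    apply Finset.sum_subset (Finset.filter_subset _ _)
    intro e he hne
    have hnsf : ¬ Squarefree e := by
      intro hsf
      exact hne (Finset.mem_filter.2 ⟨he, hsf⟩)
    rw [moebius_eq_zero_of_not_squarefree hnsf]
    simp
  have h2 : ∑ e ∈ k.divisors, (moebius e : ℤ) * d (k / e)
      = ∑ e ∈ k.divisors, (moebius e : ℤ) * Dk (k/e) n (-m) := by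
    apply Finset.sum_congr rfl
    intro e he
    rw [Nat.mem_divisors] at he
    have h1e : 1 ≤ k / e := by
      apply Nat.div_pos (Nat.le_of_dvd hk he.1) (Nat.pos_of_dvd_of_pos he.1 hk)
    rw [d_eq_Dk n m d hd1 hd2 hdRec (k/e) h1e]
  rw [h1, h2]
  exact ASM n (-m) k hk


/-- For integers `n ≥ 2`, `1 - n ≤ m ≤ n`, and the sequence `d_{m,n,k}`,
`Φ₁(k, d_{m,n}) ≡ 0 (mod k)`. -/
theorem statement15 (n m : ℤ) (hn : 2 ≤ n) (hm1 : 1 - n ≤ m) (hm2 : m ≤ n)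
    (d : ℕ → ℤ)
    (hd1 : d 1 = n) (hd2 : d 2 = n ^ 2 + 2 * m)
    (hdRec : ∀ k : ℕ, 3 ≤ k → d k = n * d (k - 1) + m * d (k - 2))
    (k : ℕ) (hk : 0 < k) :
    (k : ℤ) ∣ Phi1 k d := by
  unfold Phi1
  exact statement15' n m d hd1 hd2 hdRec k hk
end
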